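/- arXiv:2209.06809 — 4 statements merged into one kernel-verified Lean document; each statement's English description precedes it below -/
import Mathlib

section
/- If L1 ⊆ Σ* is a context-free language and L2 ⊆ Σ* is a regular language over the same alphabet Σ, then the intersection L1 ∩ L2 is a context-free language. -/
namespace BarHillelAux

open ContextFreeGrammar

variable {T : Type} {σ : Type}

/-- Nonterminals of the product grammar: a fresh start symbol (`none`) plus triples. -/
abbrev NTt (σ N : Type) := Option (σ × N × σ)

/-- `Lifts M q s sh q'` : `sh` is an annotated lift of the sentential form `s`,
chaining DFA states from `q` to `q'`. -/
inductive Lifts {N : Type} (M : DFA T σ) :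
    σ → List (Symbol T N) → List (Symbol T (NTt σ N)) → σ → Prop
  | nil (q : σ) : Lifts M q [] [] q
  | term {q q' : σ} (a : T) {s sh} (h : Lifts M (M.step q a) s sh q') :
      Lifts M q (.terminal a :: s) (.terminal a :: sh) q'
  | nt {q q' : σ} (A : N) (p : σ) {s sh} (h : Lifts M p s sh q') :
      Lifts M q (.nonterminal A :: s) (.nonterminal (some (q, A, p)) :: sh) q'

variable {N : Type} {M : DFA T σ}

lemma Lifts.append {q m q' : σ} {s t : List (Symbol T N)} {sh th}
    (h1 : Lifts M q s sh m) (h2 : Lifts M m t th q') :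
    Lifts M q (s ++ t) (sh ++ th) q' := by
  induction h1 with
  | nil => simpa using h2
  | term a _ ih => exact .term a (ih h2)
  | nt A p _ ih => exact .nt A p (ih h2)

lemma Lifts.split {q q' : σ} {u : List (Symbol T N)} {sh}
    (h : Lifts M q u sh q') : ∀ x y, sh = x ++ y →
    ∃ s t m, u = s ++ t ∧ Lifts M q s x m ∧ Lifts M m t y q' := by
  induction h with
  | nil q =>
    rintro x y hxy
    obtain ⟨rfl, rfl⟩ := (List.append_eq_nil_iff).mp hxy.symm
    exact ⟨[], [], q, rfl, .nil q, .nil q⟩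
  | @term q q' a s sh h ih =>
    rintro x y hxy
    cases x with
    | nil =>
      rw [List.nil_append] at hxy
      subst hxy
      exact ⟨[], _, q, rfl, .nil q, .term a h⟩
    | cons z x' =>
      simp only [List.cons_append, List.cons.injEq] at hxy
      obtain ⟨rfl, hxy⟩ := hxy
      obtain ⟨s1, t1, m, rfl, hs, ht⟩ := ih x' y hxy
      exact ⟨.terminal a :: s1, t1, m, rfl, .term a hs, ht⟩
  | @nt q q' A p s sh h ih =>
    rintro x y hxy
    cases x with
    | nil =>
      rw [List.nil_append] at hxy
      subst hxy
      exact ⟨[], _, q, rfl, .nil q, .nt A p h⟩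
    | cons z x' =>
      simp only [List.cons_append, List.cons.injEq] at hxy
      obtain ⟨rfl, hxy⟩ := hxy
      obtain ⟨s1, t1, m, rfl, hs, ht⟩ := ih x' y hxy
      exact ⟨.nonterminal A :: s1, t1, m, rfl, .nt A p hs, ht⟩

lemma Lifts.nil_inv {p q' : σ} {s : List (Symbol T N)} (h : Lifts M p s [] q') :
    s = [] ∧ q' = p := by cases h; exact ⟨rfl, rfl⟩

lemma Lifts.nil_src_inv {p q' : σ} {sh : List (Symbol T (NTt σ N))}
    (h : Lifts M p [] sh q') : sh = [] ∧ q' = p := by cases h; exact ⟨rfl, rfl⟩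

/-- Inversion when the lifted side is a single nonterminal. -/
lemma Lifts.singleton_nt_inv {q q' : σ} {s : List (Symbol T N)} {x}
    (h : Lifts M q s [Symbol.nonterminal x] q') :
    ∃ A, x = some (q, A, q') ∧ s = [Symbol.nonterminal A] := by
  cases h with
  | nt A p h =>
    obtain ⟨rfl, rfl⟩ := h.nil_inv
    exact ⟨A, rfl, rfl⟩

/-- Inversion when the source side is a single nonterminal. -/
lemma Lifts.nt_singleton_inv {q q' : σ} {A : N} {sh}
    (h : Lifts M q [Symbol.nonterminal A] sh q') :
    sh = [Symbol.nonterminal (some (q, A, q'))] := by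
  cases h with
  | nt A p h =>
    obtain ⟨rfl, rfl⟩ := h.nil_src_inv
    rfl

lemma lifts_map_terminal_inv : ∀ {w : List T} {q q' : σ} {s : List (Symbol T N)},
    Lifts M q s (w.map Symbol.terminal) q' →
    s = w.map Symbol.terminal ∧ q' = M.evalFrom q w := by
  intro w
  induction w with
  | nil =>
    intro q q' s h
    cases h
    exact ⟨rfl, rfl⟩
  | cons a w ih =>
    intro q q' s h
    cases h with
    | term a h =>
      obtain ⟨rfl, rfl⟩ := ih h
      exact ⟨rfl, rfl⟩

/-- Canonical lift function, used only to prove finiteness. -/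
def liftWith (M : DFA T σ) : σ → List (Symbol T N) → List σ → List (Symbol T (NTt σ N))
  | _, [], _ => []
  | q, .terminal a :: s, cs => .terminal a :: liftWith M (M.step q a) s cs
  | _, .nonterminal _ :: _, [] => []
  | q, .nonterminal A :: s, p :: cs => .nonterminal (some (q, A, p)) :: liftWith M p s cs

lemma lifts_liftWith {q q' : σ} {s : List (Symbol T N)} {sh} (h : Lifts M q s sh q') :
    ∃ cs : List σ, cs.length ≤ s.length ∧ sh = liftWith M q s cs := by
  induction h with
  | nil q => exact ⟨[], by simp, rfl⟩
  | term a _ ih =>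
    obtain ⟨cs, hlen, rfl⟩ := ih
    exact ⟨cs, by simpa using Nat.le_succ_of_le hlen, rfl⟩
  | nt A p _ ih =>
    obtain ⟨cs, hlen, rfl⟩ := ih
    exact ⟨p :: cs, by simpa using hlen, rfl⟩

lemma finite_outs [Fintype σ] (M : DFA T σ) (o : List (Symbol T N)) :
    {out | ∃ q q' : σ, Lifts M q o out q'}.Finite := by
  apply Set.Finite.subset
    (Set.Finite.image (fun qc : σ × List σ => liftWith M qc.1 o qc.2)
      ((Set.finite_univ (α := σ)).prod (List.finite_length_le σ o.length)))
  rintro out ⟨q, q', h⟩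
  obtain ⟨cs, hlen, rfl⟩ := lifts_liftWith h
  exact ⟨(q, cs), ⟨trivial, hlen⟩, rfl⟩

/-- Rules of the product grammar. -/
def prodRules (g : ContextFreeGrammar T) (M : DFA T σ) :
    Set (ContextFreeRule T (NTt σ g.NT)) :=
  {rl | ∃ f ∈ M.accept,
      rl = ⟨none, [Symbol.nonterminal (some (M.start, g.initial, f))]⟩} ∪
  {rl | ∃ r ∈ g.rules, ∃ q q' out, Lifts M q r.output out q' ∧
      rl = ⟨some (q, r.input, q'), out⟩}

lemma finite_prodRules [Fintype σ] (g : ContextFreeGrammar T) (M : DFA T σ) :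
    (prodRules g M).Finite := by
  apply Set.Finite.union
  · apply Set.Finite.subset (Set.finite_range (fun f : σ =>
      (⟨none, [Symbol.nonterminal (some (M.start, g.initial, f))]⟩ :
        ContextFreeRule T (NTt σ g.NT))))
    rintro rl ⟨f, -, rfl⟩
    exact ⟨f, rfl⟩
  · have : {rl | ∃ r ∈ g.rules, ∃ q q' out, Lifts M q r.output out q' ∧
        rl = (⟨some (q, r.input, q'), out⟩ : ContextFreeRule T (NTt σ g.NT))} =
        ⋃ r ∈ (g.rules : Set (ContextFreeRule T g.NT)),
          {rl | ∃ q q' out, Lifts M q r.output out q' ∧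
            rl = ⟨some (q, r.input, q'), out⟩} := by
      ext rl; simp
    rw [this]
    apply Set.Finite.biUnion (g.rules.finite_toSet)
    intro r _
    apply Set.Finite.subset
      (Set.Finite.image
        (fun x : σ × σ × List (Symbol T (NTt σ g.NT)) =>
          (⟨some (x.1, r.input, x.2.1), x.2.2⟩ : ContextFreeRule T (NTt σ g.NT)))
        ((Set.finite_univ (α := σ)).prod ((Set.finite_univ (α := σ)).prod
          (finite_outs M r.output))))
    rintro rl ⟨q, q', out, hl, rfl⟩
    exact ⟨(q, q', out), ⟨trivial, trivial, q, q', hl⟩, rfl⟩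

/-- The product grammar. -/
noncomputable def prodG [Fintype σ] (g : ContextFreeGrammar T) (M : DFA T σ) :
    ContextFreeGrammar T :=
  ⟨NTt σ g.NT, none, (finite_prodRules g M).toFinset⟩

lemma mem_prodG_rules [Fintype σ] {g : ContextFreeGrammar T} {M : DFA T σ}
    {rl : ContextFreeRule T (NTt σ g.NT)} :
    rl ∈ (prodG g M).rules ↔ rl ∈ prodRules g M :=
  (finite_prodRules g M).mem_toFinset

/-! ### Soundness -/

lemma sound_step [Fintype σ] {g : ContextFreeGrammar T} {M : DFA T σ}
    {uh vh : List (Symbol T (NTt σ g.NT))} {q q' : σ} {u : List (Symbol T g.NT)}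
    (hp : (prodG g M).Produces uh vh) (hl : Lifts M q u uh q') :
    ∃ v, g.Produces u v ∧ Lifts M q v vh q' := by
  obtain ⟨r, hrmem, hrw⟩ := hp
  obtain ⟨x, y, hxy, rfl⟩ := hrw.exists_parts
  subst hxy
  obtain ⟨s1, t1, m, rfl, hx, ht1⟩ :=
    hl.split x ([Symbol.nonterminal r.input] ++ y) (List.append_assoc _ _ _)
  obtain ⟨s2, t2, m2, rfl, hmid, hy⟩ := ht1.split [Symbol.nonterminal r.input] y rfl
  obtain ⟨A, hA, rfl⟩ := hmid.singleton_nt_inv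
  replace hrmem := mem_prodG_rules.mp hrmem
  rcases hrmem with ⟨f, hf, rfl⟩ | ⟨r0, hr0, q0, q1, out, hout, hrl⟩
  · simp at hA
  · subst hrl
    simp only [Option.some.injEq, Prod.mk.injEq] at hA
    obtain ⟨rfl, rfl, rfl⟩ := hA
    refine ⟨s1 ++ r0.output ++ t2, ⟨r0, hr0, ?_⟩, ?_⟩
    · simpa using ContextFreeRule.rewrites_of_exists_parts r0 s1 t2
    · have := hx.append (hout.append hy)
      exact (hx.append hout).append hy


lemma sound_derives [Fintype σ] {g : ContextFreeGrammar T} {M : DFA T σ}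
    {uh wh : List (Symbol T (NTt σ g.NT))} (h : (prodG g M).Derives uh wh) :
    ∀ {u : List (Symbol T g.NT)} {q q' : σ}, Lifts M q u uh q' →
      ∃ w', g.Derives u w' ∧ Lifts M q w' wh q' := by
  induction h using Relation.ReflTransGen.head_induction_on with
  | refl => exact fun hl => ⟨_, by rfl, hl⟩
  | head hp _ ih =>
    intro u q q' hl
    obtain ⟨v, hpv, hlv⟩ := sound_step hp hl
    obtain ⟨w', hd, hlw⟩ := ih hlv
    exact ⟨w', hpv.trans_derives hd, hlw⟩

/-! ### Step-counted derivations -/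

inductive DIn (g : ContextFreeGrammar T) :
    List (Symbol T g.NT) → List (Symbol T g.NT) → ℕ → Prop
  | refl (u) : DIn g u u 0
  | head {u v w n} (h : g.Produces u v) (hd : DIn g v w n) : DIn g u w (n + 1)

variable {g : ContextFreeGrammar T}

lemma DIn.tail {u v w : List (Symbol T g.NT)} {n} (h : DIn g u v n) (hp : g.Produces v w) :
    DIn g u w (n + 1) := by
  induction h with
  | refl => exact .head hp (.refl w)
  | head h _ ih => exact .head h (ih hp)

lemma derives_iff_dIn {u v : List (Symbol T g.NT)} :
    g.Derives u v ↔ ∃ n, DIn g u v n := by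
  constructor
  · intro h
    induction h with
    | refl => exact ⟨0, .refl u⟩
    | tail _ hp ih => obtain ⟨n, hn⟩ := ih; exact ⟨n + 1, hn.tail hp⟩
  · rintro ⟨n, h⟩
    induction h with
    | refl => rfl
    | head hp _ ih => exact hp.trans_derives ih

lemma rewrites_append {N : Type*} {r : ContextFreeRule T N} {u v z : List (Symbol T N)}
    (h : r.Rewrites (u ++ v) z) :
    (∃ u', r.Rewrites u u' ∧ z = u' ++ v) ∨ (∃ v', r.Rewrites v v' ∧ z = u ++ v') := by
  obtain ⟨p, q, h1, rfl⟩ := h.exists_parts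
  rw [List.append_assoc] at h1
  rcases List.append_eq_append_iff.mp h1 with ⟨l, hp, hv⟩ | ⟨l, hu, hq⟩
  · subst hp hv
    exact Or.inr ⟨l ++ r.output ++ q,
      by simpa [List.append_assoc] using ContextFreeRule.rewrites_of_exists_parts r l q,
      by simp [List.append_assoc]⟩
  · cases l with
    | nil =>
      simp only [List.append_nil] at hu
      subst hu
      rw [List.nil_append] at hq
      subst hq
      exact Or.inr ⟨r.output ++ q, by simpa using ContextFreeRule.rewrites_of_exists_parts r [] q,
        by simp [List.append_assoc]⟩
    | cons z0 l' =>
      simp only [List.cons_append, List.cons.injEq] at hq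
      obtain ⟨rfl, rfl⟩ := hq
      subst hu
      exact Or.inl ⟨p ++ r.output ++ l',
        by simpa [List.append_assoc] using ContextFreeRule.rewrites_of_exists_parts r p l',
        by simp [List.append_assoc]⟩

lemma dIn_append : ∀ {s x : List (Symbol T g.NT)} {n}, DIn g s x n →
    ∀ {u v : List (Symbol T g.NT)}, s = u ++ v →
    ∃ x1 x2 n1 n2, x = x1 ++ x2 ∧ n1 + n2 = n ∧ DIn g u x1 n1 ∧ DIn g v x2 n2 := by
  intro s x n h
  induction h with
  | refl u0 =>
    rintro u v rfl
    exact ⟨u, v, 0, 0, rfl, rfl, .refl u, .refl v⟩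
  | @head u0 v0 w0 n0 hp hd ih =>
    rintro u v rfl
    obtain ⟨r, hr, hrw⟩ := hp
    rcases rewrites_append hrw with ⟨u', hru, rfl⟩ | ⟨v', hrv, rfl⟩
    · obtain ⟨x1, x2, n1, n2, hx, hn, h1, h2⟩ := ih rfl
      exact ⟨x1, x2, n1 + 1, n2, hx, by omega, .head ⟨r, hr, hru⟩ h1, h2⟩
    · obtain ⟨x1, x2, n1, n2, hx, hn, h1, h2⟩ := ih rfl
      exact ⟨x1, x2, n1, n2 + 1, hx, by omega, h1, .head ⟨r, hr, hrv⟩ h2⟩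

lemma no_rewrite {N : Type*} {r : ContextFreeRule T N} {s v : List (Symbol T N)}
    (hs : ∀ A, Symbol.nonterminal A ∉ s) : ¬ r.Rewrites s v := by
  intro h
  obtain ⟨p, q, h1, -⟩ := h.exists_parts
  exact hs r.input (h1 ▸ by simp)

lemma dIn_no_nt {u x : List (Symbol T g.NT)} {n} (hs : ∀ A, Symbol.nonterminal A ∉ u)
    (h : DIn g u x n) : x = u := by
  induction h with
  | refl => rfl
  | head hp _ _ =>
    obtain ⟨r, -, hrw⟩ := hp
    exact absurd hrw (no_rewrite hs)

lemma DIn.cases_head {u x : List (Symbol T g.NT)} {n} (h : DIn g u x n) :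
    (u = x ∧ n = 0) ∨ ∃ v k, g.Produces u v ∧ DIn g v x k ∧ n = k + 1 := by
  cases h with
  | refl => exact Or.inl ⟨rfl, rfl⟩
  | head hp hd => exact Or.inr ⟨_, _, hp, hd, rfl⟩

lemma rewrite_singleton {N : Type*} {r : ContextFreeRule T N} {A : N} {v : List (Symbol T N)}
    (h : r.Rewrites [Symbol.nonterminal A] v) : r.input = A ∧ v = r.output := by
  obtain ⟨p, q, h1, rfl⟩ := h.exists_parts
  cases p with
  | nil =>
    rw [List.nil_append] at h1 ⊢
    simp only [List.cons_append, List.nil_append, List.cons.injEq, Symbol.nonterminal.injEq]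
      at h1
    obtain ⟨rfl, rfl⟩ := h1
    simp
  | cons z p' =>
    exfalso
    simp only [List.cons_append, List.cons.injEq] at h1
    obtain ⟨-, h1⟩ := h1
    exact absurd h1.symm (by simp)

/-! ### Completeness -/

lemma complete_aux [Fintype σ] (g : ContextFreeGrammar T) (M : DFA T σ) :
    ∀ n (u : List (Symbol T g.NT)) (w : List T) (q : σ),
      DIn g u (w.map Symbol.terminal) n →
      ∃ uh, Lifts M q u uh (M.evalFrom q w) ∧
        (prodG g M).Derives uh (w.map Symbol.terminal) := by
  intro n
  induction n using Nat.strong_induction_on with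
  | _ n IH =>
  suffices H : ∀ (u : List (Symbol T g.NT)), ∀ m ≤ n, ∀ (w : List T) (q : σ),
      DIn g u (w.map Symbol.terminal) m →
      ∃ uh, Lifts M q u uh (M.evalFrom q w) ∧
        (prodG g M).Derives uh (w.map Symbol.terminal) from
    fun u w q h => H u n le_rfl w q h
  intro u
  induction u with
  | nil =>
    intro m hm w q h
    have hx : w.map Symbol.terminal = ([] : List (Symbol T g.NT)) :=
      dIn_no_nt (by simp) h
    obtain rfl : w = [] := by cases w <;> simp_all
    exact ⟨[], by simpa using Lifts.nil q, by rfl⟩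
  | cons x u' ihu =>
    intro m hm w q h
    obtain ⟨x1, x2, n1, n2, hx, hn, h1, h2⟩ :=
      dIn_append h (u := [x]) (v := u') rfl
    obtain ⟨w1, w2, rfl, hx1, hx2⟩ := List.map_eq_append_iff.mp hx
    subst hx1 hx2
    cases x with
    | terminal a =>
      have : w1.map Symbol.terminal = [Symbol.terminal a] := dIn_no_nt (by simp) h1
      obtain rfl : w1 = [a] := by
        cases w1 with
        | nil => simp at this
        | cons b w1' => simp_all
      obtain ⟨uh', hl', hd'⟩ := ihu n2 (by omega) w2 (M.step q a) h2
      refine ⟨Symbol.terminal a :: uh', ?_, ?_⟩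
      · have he : M.evalFrom q ([a] ++ w2) = M.evalFrom (M.step q a) w2 := rfl
        rw [he]
        exact .term a hl'
      · exact hd'.append_left [Symbol.terminal a]
    | nonterminal A =>
      rcases h1.cases_head with ⟨heq, -⟩ | ⟨v, k, hp, hrest, rfl⟩
      · exfalso
        cases w1 with
        | nil => simp at heq
        | cons b w1' => simp at heq
      ·
        obtain ⟨r, hrmem, hrw⟩ := hp
        obtain ⟨hinput, rfl⟩ := rewrite_singleton hrw
        subst hinput
        obtain ⟨uh1, hl1, hd1⟩ := IH k (by omega) r.output w1 q hrest
        obtain ⟨uh', hl', hd'⟩ := ihu n2 (by omega) w2 (M.evalFrom q w1) h2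
        refine ⟨Symbol.nonterminal (some (q, r.input, M.evalFrom q w1)) :: uh', ?_, ?_⟩
        · rw [M.evalFrom_of_append q w1 w2]
          exact .nt r.input (M.evalFrom q w1) hl'
        · have hrule : (⟨some (q, r.input, M.evalFrom q w1), uh1⟩ :
              ContextFreeRule T (NTt σ g.NT)) ∈ (prodG g M).rules :=
            mem_prodG_rules.2 (Or.inr ⟨r, hrmem, q, M.evalFrom q w1, uh1, hl1, rfl⟩)
          have hstep : (prodG g M).Produces
              (Symbol.nonterminal (some (q, r.input, M.evalFrom q w1)) :: uh') (uh1 ++ uh') :=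
            ⟨_, hrule, ContextFreeRule.Rewrites.head uh'⟩
          have hd2 : (prodG g M).Derives (uh1 ++ uh') (w1.map Symbol.terminal ++ uh') :=
            hd1.append_right uh'
          have hd3 : (prodG g M).Derives (w1.map Symbol.terminal ++ uh')
              (w1.map Symbol.terminal ++ w2.map Symbol.terminal) :=
            hd'.append_left (w1.map Symbol.terminal)
          have := hstep.trans_derives (hd2.trans hd3)
          rw [List.map_append]; exact this

/-! ### Language equality -/

lemma prodG_language [Fintype σ] (g : ContextFreeGrammar T) (M : DFA T σ) :
    (prodG g M).language = g.language ⊓ M.accepts := by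
  ext w
  constructor
  · intro hw
    rcases (ContextFreeGrammar.Derives.eq_or_head hw) with heq | ⟨vh, hp, hd⟩
    · exfalso
      cases w with
      | nil => simp at heq
      | cons a w' => simp at heq
    · obtain ⟨r, hrmem, hrw⟩ := hp
      obtain ⟨hinput, rfl⟩ := rewrite_singleton hrw
      replace hrmem := mem_prodG_rules.mp hrmem
      rcases hrmem with ⟨f, hf, rfl⟩ | ⟨r0, hr0, q0, q1, out, hout, rfl⟩
      · have hl : Lifts M M.start [Symbol.nonterminal g.initial]
            [Symbol.nonterminal (some (M.start, g.initial, f))] f :=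
          .nt g.initial f (.nil f)
        obtain ⟨w', hdw, hlw⟩ := sound_derives hd hl
        obtain ⟨rfl, hq⟩ := lifts_map_terminal_inv hlw
        exact ⟨hdw, show M.evalFrom M.start w ∈ M.accept from hq ▸ hf⟩
      · simp [prodG] at hinput
  · rintro ⟨hw1, hw2⟩
    obtain ⟨n, hn⟩ := derives_iff_dIn.mp hw1
    obtain ⟨uh, hl, hd⟩ := complete_aux g M n [Symbol.nonterminal g.initial] w M.start hn
    rw [hl.nt_singleton_inv] at hd
    have hf : M.evalFrom M.start w ∈ M.accept := (DFA.mem_accepts M).mp hw2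
    have hrule : (⟨none, [Symbol.nonterminal (some (M.start, g.initial, M.evalFrom M.start w))]⟩ :
        ContextFreeRule T (NTt σ g.NT)) ∈ (prodG g M).rules :=
      mem_prodG_rules.2 (Or.inl ⟨M.evalFrom M.start w, hf, rfl⟩)
    have hstep : (prodG g M).Produces [Symbol.nonterminal (prodG g M).initial]
        [Symbol.nonterminal (some (M.start, g.initial, M.evalFrom M.start w))] :=
      ⟨_, hrule, ContextFreeRule.Rewrites.input_output⟩
    exact hstep.trans_derives hd

end BarHillelAux

/-- **Bar-Hillel, unweighted.**  The intersection of a context-free language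
with a regular language is context-free. -/
theorem contextFree_inter_regular {T : Type} {L1 L2 : Language T}
    (h1 : L1.IsContextFree) (h2 : L2.IsRegular) :
    (L1 ⊓ L2).IsContextFree := by
  obtain ⟨g, rfl⟩ := h1
  obtain ⟨σ, hfin, M, rfl⟩ := h2
  haveI := hfin
  exact ⟨BarHillelAux.prodG g M, BarHillelAux.prodG_language g M⟩
end

section
/- (Completeness part of the strong-equivalence theorem.) Let G be a WCFG and A a WFSA over the same alphabet Σ and the same commutative semiring W, and let G∩ be the generalized Bar-Hillel grammar. For every derivation t of G and every path π of A with yield(t) = yield(π), there exists a derivation t∩ of G∩ with yield(t∩) = yield(t) and w(t∩) = w(t) ⊗ w(π). -/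
/-!
Common definitions: weighted context-free grammars (WCFGs), weighted
finite-state automata (WFSAs), leftmost derivations, paths and subpaths,
and the (generalized and original) Bar-Hillel intersection constructions.
-/

/-- A weighted production rule `X → α / w`. -/
structure Rule (T N K : Type*) where
  lhs : N
  rhs : List (T ⊕ N)
  wt  : K

/-- A weighted context-free grammar over terminals `T`, nonterminals `N`
and weights `K`. -/
structure WCFG (T N K : Type*) where
  start : N
  rules : Set (Rule T N K)

/-- A leftmost rewrite step `α ⇒_L β` using rule `r`: the leftmost
nonterminal of `α` (everything to its left is terminal) is rewritten by `r`. -/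
def StepL {T N K : Type*} (G : WCFG T N K) (r : Rule T N K)
    (α β : List (T ⊕ N)) : Prop :=
  r ∈ G.rules ∧ ∃ (z : List T) (δ : List (T ⊕ N)),
    α = (z.map Sum.inl) ++ (Sum.inr r.lhs :: δ) ∧
    β = (z.map Sum.inl) ++ r.rhs ++ δ

/-- `DerivesL G α rs x`: starting from sentential form `α` and applying the
rules `rs` by leftmost rewriting one reaches the terminal string `x`. -/
inductive DerivesL {T N K : Type*} (G : WCFG T N K) :
    List (T ⊕ N) → List (Rule T N K) → List T → Prop
  | refl (x : List T) : DerivesL G (x.map Sum.inl) [] x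
  | step {α β : List (T ⊕ N)} {r : Rule T N K} {rs : List (Rule T N K)}
      {x : List T} :
      StepL G r α β → DerivesL G β rs x → DerivesL G α (r :: rs) x

/-- A (sub)derivation of `G` starting from the sentential form `α`,
recorded as the sequence of applied rules together with its yield. -/
structure DerivFrom {T N K : Type*} (G : WCFG T N K) (α : List (T ⊕ N)) where
  rules : List (Rule T N K)
  yield : List T
  ok : DerivesL G α rules yield

/-- The weight of a derivation: the `⊗`-product of the weights of the
applied rules. -/
def DerivFrom.weight {T N K : Type*} [CommSemiring K] {G : WCFG T N K}
    {α : List (T ⊕ N)} (d : DerivFrom G α) : K :=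
  (d.rules.map Rule.wt).prod

/-- Derivations of `G` rooted at the nonterminal `X`.  (For `X = G.start`
these are exactly the derivations of `G`; note that at least one rule is
necessarily applied.) -/
abbrev Deriv {T N K : Type*} (G : WCFG T N K) (X : N) : Type _ :=
  DerivFrom G [Sum.inr X]

/-- A weighted arc `src --lab/wt--> dst`; `lab = none` represents an ε-arc. -/
structure Arc (T Q K : Type*) where
  src : Q
  lab : Option T
  wt  : K
  dst : Q

/-- A weighted finite-state automaton over terminals `T`, states `Q` and
weights `K`; `arcs` is a finite multiset of weighted arcs, and `init`/`final`
are the initial/final weight functions. -/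
structure WFSA (T Q K : Type*) where
  arcs : Multiset (Arc T Q K)
  init : Q → K
  final : Q → K

/-- `ChainFrom A p as q`: `as` is a sequence of arcs of `A` with matched
adjacent states, leading from state `p` to state `q`. -/
inductive ChainFrom {T Q K : Type*} (A : WFSA T Q K) :
    Q → List (Arc T Q K) → Q → Prop
  | nil (q : Q) : ChainFrom A q [] q
  | cons {a : Arc T Q K} {as : List (Arc T Q K)} {q : Q} :
      a ∈ A.arcs → ChainFrom A a.dst as q → ChainFrom A a.src (a :: as) q

/-- A subpath of `A` from state `p` to state `q` (possibly empty). -/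
structure SubPath {T Q K : Type*} (A : WFSA T Q K) (p q : Q) where
  arcs : List (Arc T Q K)
  ok : ChainFrom A p arcs q

/-- The yield of a subpath: the concatenation of its arc labels
(ε contributing nothing). -/
def SubPath.yield {T Q K : Type*} {A : WFSA T Q K} {p q : Q}
    (π : SubPath A p q) : List T :=
  π.arcs.filterMap Arc.lab

/-- The inner weight `w̃(π)` of a subpath: the `⊗`-product of its arc weights
(no initial/final weights; `1̄` if empty). -/
def SubPath.weight {T Q K : Type*} [CommSemiring K] {A : WFSA T Q K} {p q : Q}
    (π : SubPath A p q) : K :=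
  (π.arcs.map Arc.wt).prod

/-- An accepting path of `A`: a nonempty chained sequence of arcs starting at
an initial state (`init ≠ 0̄`) and ending at a final state (`final ≠ 0̄`). -/
structure FSAPath {T Q K : Type*} [Zero K] (A : WFSA T Q K) where
  src : Q
  dst : Q
  arcs : List (Arc T Q K)
  ne : arcs ≠ []
  chain : ChainFrom A src arcs dst
  src_init : A.init src ≠ 0
  dst_final : A.final dst ≠ 0

/-- The yield of a path: the concatenation of its arc labels. -/
def FSAPath.yield {T Q K : Type*} [Zero K] {A : WFSA T Q K} (π : FSAPath A) : List T :=
  π.arcs.filterMap Arc.lab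

/-- The weight of a path: `λ(q₀) ⊗ w₁ ⊗ ⋯ ⊗ w_N ⊗ ρ(q_N)`. -/
def FSAPath.weight {T Q K : Type*} [CommSemiring K] {A : WFSA T Q K}
    (π : FSAPath A) : K :=
  A.init π.src * (π.arcs.map Arc.wt).prod * A.final π.dst

/-- Middle symbols of Bar-Hillel triplet nonterminals: `N ∪ {S̄} ∪ Σ ∪ {ε}`. -/
inductive BHSym (T N : Type*) where
  | nt  : N → BHSym T N
  | bar : BHSym T N
  | term : T → BHSym T N
  | eps : BHSym T N

/-- Nonterminals of the Bar-Hillel grammar: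
`{S} ∪ Q × (N ∪ {S̄} ∪ Σ ∪ {ε}) × Q`. -/
inductive BHNT (T N Q : Type*) where
  | start : BHNT T N Q
  | trip : Q → BHSym T N → Q → BHNT T N Q

/-- View a grammar symbol (terminal or nonterminal) as a triplet middle
symbol. -/
def BHSym.ofSym {T N : Type*} : T ⊕ N → BHSym T N
  | Sum.inl a => BHSym.term a
  | Sum.inr X => BHSym.nt X

/-- View an arc label (`none` = ε) as a triplet middle symbol. -/
def BHSym.ofLab {T N : Type*} : Option T → BHSym T N
  | some a => BHSym.term a
  | none   => BHSym.eps

/-- The sentential form corresponding to the root symbol of a subderivation: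
a nonterminal root `X` gives `X`, a terminal root `a` gives `a`, and an
ε root gives the empty form. -/
def BHSym.form {T N : Type*} : BHSym T N → List (T ⊕ N)
  | BHSym.nt X => [Sum.inr X]
  | BHSym.term a => [Sum.inl a]
  | BHSym.eps => []
  | BHSym.bar => []

/-- Subderivations of `G` rooted at the symbol `s ∈ N ∪ Σ ∪ {ε}`:
for a nonterminal root at least one rule is applied; for a root in
`Σ ∪ {ε}` no rule is applied, the yield is the root symbol itself and the
weight is `1̄`. -/
abbrev SubDeriv {T N K : Type*} (G : WCFG T N K) (s : BHSym T N) : Type _ :=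
  DerivFrom G s.form

/-- `(q₀,X₁,q₁)(q₁,X₂,q₂)⋯(q_{M-1},X_M,q_M)` as a right-hand side of the
Bar-Hillel grammar, where the `Xᵢ` traverse `syms` and `q₁,…,q_M` traverse
`qs`. -/
def tripRHS {T N Q : Type*} : Q → List (T ⊕ N) → List Q → List (T ⊕ BHNT T N Q)
  | _, [], _ => []
  | _, _ :: _, [] => []
  | q0, s :: ss, q :: qs => Sum.inr (BHNT.trip q0 (BHSym.ofSym s) q) :: tripRHS q ss qs

section BarHillel

variable {T N Q K : Type*} [CommSemiring K]

/-- Rule schema (a): `S → (qI,S̄,qF) / λ(qI)⊗ρ(qF)` for `qI ∈ I`, `qF ∈ F`. -/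
def bhRulesStart (G : WCFG T N K) (A : WFSA T Q K) : Set (Rule T (BHNT T N Q) K) :=
  {r | ∃ qI qF : Q, A.init qI ≠ 0 ∧ A.final qF ≠ 0 ∧
    r = ⟨BHNT.start, [Sum.inr (BHNT.trip qI BHSym.bar qF)],
         A.init qI * A.final qF⟩}

/-- Rule schema (b): `(qI,S̄,q₁) → (qI,S̄,q₀)(q₀,ε,q₁) / 1̄` for `qI ∈ I`,
`q₀,q₁ ∈ Q`. -/
def bhRulesBar (G : WCFG T N K) (A : WFSA T Q K) : Set (Rule T (BHNT T N Q) K) :=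
  {r | ∃ qI q0 q1 : Q, A.init qI ≠ 0 ∧
    r = ⟨BHNT.trip qI BHSym.bar q1,
         [Sum.inr (BHNT.trip qI BHSym.bar q0), Sum.inr (BHNT.trip q0 BHSym.eps q1)],
         1⟩}

/-- Rule schema (c): `(qI,S̄,q₀) → (qI,S,q₀) / 1̄` for `qI ∈ I`, `q₀ ∈ Q`. -/
def bhRulesExit (G : WCFG T N K) (A : WFSA T Q K) : Set (Rule T (BHNT T N Q) K) :=
  {r | ∃ qI q0 : Q, A.init qI ≠ 0 ∧
    r = ⟨BHNT.trip qI BHSym.bar q0,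
         [Sum.inr (BHNT.trip qI (BHSym.nt G.start) q0)], 1⟩}

/-- Rule schema (d): `(q₀,X,q_M) → (q₀,X₁,q₁)⋯(q_{M-1},X_M,q_M) / w` for each
rule `X → X₁⋯X_M / w` of `G` with `M > 0` and all `q₀,…,q_M ∈ Q`. -/
def bhRulesCFG (G : WCFG T N K) (A : WFSA T Q K) : Set (Rule T (BHNT T N Q) K) :=
  {r | ∃ (r₀ : Rule T N K) (q0 : Q) (qs : List Q),
    r₀ ∈ G.rules ∧ r₀.rhs ≠ [] ∧ qs.length = r₀.rhs.length ∧
    r = ⟨BHNT.trip q0 (BHSym.nt r₀.lhs) (qs.getLastD q0),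
         tripRHS q0 r₀.rhs qs, r₀.wt⟩}

/-- Rule schema (e): `(q₀,X,q₀) → ε / w` for each rule `X → ε / w` of `G`
and `q₀ ∈ Q`. -/
def bhRulesNil (G : WCFG T N K) (A : WFSA T Q K) : Set (Rule T (BHNT T N Q) K) :=
  {r | ∃ (r₀ : Rule T N K) (q : Q), r₀ ∈ G.rules ∧ r₀.rhs = [] ∧
    r = ⟨BHNT.trip q (BHSym.nt r₀.lhs) q, [], r₀.wt⟩}

/-- Rule schema (f): `(q₀,a,q₁) → a / w` for each arc `q₀ --a/w--> q₁` of `A`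
with `a ∈ Σ ∪ {ε}`. -/
def bhRulesArc (G : WCFG T N K) (A : WFSA T Q K) : Set (Rule T (BHNT T N Q) K) :=
  {r | ∃ a : Arc T Q K, a ∈ A.arcs ∧
    r = ⟨BHNT.trip a.src (BHSym.ofLab a.lab) a.dst,
         a.lab.toList.map Sum.inl, a.wt⟩}

/-- Rule schema (g): `(q₀,a,q₂) → (q₀,ε,q₁)(q₁,a,q₂) / 1̄` for all `a ∈ Σ`
and `q₀,q₁,q₂ ∈ Q`. -/
def bhRulesArcEps (G : WCFG T N K) (A : WFSA T Q K) : Set (Rule T (BHNT T N Q) K) :=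
  {r | ∃ (t : T) (q0 q1 q2 : Q),
    r = ⟨BHNT.trip q0 (BHSym.term t) q2,
         [Sum.inr (BHNT.trip q0 BHSym.eps q1),
          Sum.inr (BHNT.trip q1 (BHSym.term t) q2)], 1⟩}

/-- The generalized Bar-Hillel intersection grammar `G∩` of a WCFG `G` and a
WFSA `A` (schemas (a)–(g)). -/
def BHGrammar (G : WCFG T N K) (A : WFSA T Q K) : WCFG T (BHNT T N Q) K :=
  ⟨BHNT.start,
    bhRulesStart G A ∪ bhRulesBar G A ∪ bhRulesExit G A ∪ bhRulesCFG G A ∪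
    bhRulesNil G A ∪ bhRulesArc G A ∪ bhRulesArcEps G A⟩

/-- Rule schema (a) of the original construction:
`S → (qI,S,qF) / λ(qI)⊗ρ(qF)` for `qI ∈ I`, `qF ∈ F`. -/
def obhRulesStart (G : WCFG T N K) (A : WFSA T Q K) : Set (Rule T (BHNT T N Q) K) :=
  {r | ∃ qI qF : Q, A.init qI ≠ 0 ∧ A.final qF ≠ 0 ∧
    r = ⟨BHNT.start, [Sum.inr (BHNT.trip qI (BHSym.nt G.start) qF)],
         A.init qI * A.final qF⟩}

/-- The original (Bar-Hillel / Nederhof–Satta) intersection grammar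
(schemas (a), (d), (e), (f)). -/
def OBHGrammar (G : WCFG T N K) (A : WFSA T Q K) : WCFG T (BHNT T N Q) K :=
  ⟨BHNT.start,
    obhRulesStart G A ∪ bhRulesCFG G A ∪ bhRulesNil G A ∪ bhRulesArc G A⟩

end BarHillel

section ProofAux

variable {T N Q K : Type*} [CommSemiring K] {G : WCFG T N K} {A : WFSA T Q K}

section DerivAux
variable {G' : WCFG T N K}

lemma stepL_append_right {r : Rule T N K} {α β : List (T ⊕ N)}
    (h : StepL G' r α β) (γ : List (T ⊕ N)) : StepL G' r (α ++ γ) (β ++ γ) := by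
  obtain ⟨hm, z, δ, hα, hβ⟩ := h
  exact ⟨hm, z, δ ++ γ, by simp [hα], by simp [hβ]⟩

lemma stepL_prepend {r : Rule T N K} {α β : List (T ⊕ N)}
    (h : StepL G' r α β) (y : List T) :
    StepL G' r (y.map Sum.inl ++ α) (y.map Sum.inl ++ β) := by
  obtain ⟨hm, z, δ, hα, hβ⟩ := h
  exact ⟨hm, y ++ z, δ, by simp [hα], by simp [hβ]⟩

lemma derivesL_prepend {α : List (T ⊕ N)} {rs x} (h : DerivesL G' α rs x) (y : List T) :
    DerivesL G' (y.map Sum.inl ++ α) rs (y ++ x) := by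
  induction h with
  | refl x => simpa using DerivesL.refl (G := G') (y ++ x)
  | step hs _ ih => exact DerivesL.step (stepL_prepend hs y) ih

lemma derivesL_append {α β : List (T ⊕ N)} {rs ss x y}
    (h1 : DerivesL G' α rs x) (h2 : DerivesL G' β ss y) :
    DerivesL G' (α ++ β) (rs ++ ss) (x ++ y) := by
  induction h1 with
  | refl z => simpa using derivesL_prepend h2 z
  | step hs _ ih => exact DerivesL.step (stepL_append_right hs β) ih

lemma derivesL_map_inl' : ∀ {α : List (T ⊕ N)} {rs x}, DerivesL G' α rs x →
    ∀ y : List T, α = y.map Sum.inl → rs = [] ∧ x = y := by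
  intro α rs x h
  induction h with
  | refl x =>
    intro y hy
    exact ⟨rfl, (List.map_injective_iff.mpr Sum.inl_injective) hy⟩
  | step hs _ _ =>
    intro y hy
    obtain ⟨_, z, δ, hα, _⟩ := hs
    exfalso
    have : Sum.inr ‹Rule T N K›.lhs ∈ y.map Sum.inl := by
      rw [← hy, hα]; simp
    simp at this

lemma derivesL_map_inl {y : List T} {rs x} (h : DerivesL G' (y.map Sum.inl) rs x) :
    rs = [] ∧ x = y := derivesL_map_inl' h y rfl

lemma derivesL_nil_inv {rs x} (h : DerivesL G' ([] : List (T ⊕ N)) rs x) :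
    rs = [] ∧ x = [] := derivesL_map_inl' h [] rfl

lemma derivesL_head (r : Rule T N K) (hm : r ∈ G'.rules) {rs x}
    (h : DerivesL G' r.rhs rs x) : DerivesL G' [Sum.inr r.lhs] (r :: rs) x := by
  have hstep : StepL G' r [Sum.inr r.lhs] r.rhs := ⟨hm, [], [], by simp, by simp⟩
  exact DerivesL.step hstep h

lemma derivesL_single_inv' : ∀ {α : List (T ⊕ N)} {rs x}, DerivesL G' α rs x →
    ∀ X : N, α = [Sum.inr X] →
    ∃ r rs', rs = r :: rs' ∧ r ∈ G'.rules ∧ r.lhs = X ∧ DerivesL G' r.rhs rs' x := by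
  intro α rs x h
  cases h with
  | refl x =>
    intro X hX
    exfalso
    cases x with
    | nil => simp at hX
    | cons a x => simp at hX
  | step hs h' =>
    intro X hX
    obtain ⟨hm, z, δ, hα, hβ⟩ := hs
    rw [hX] at hα
    cases z with
    | cons a z => simp at hα
    | nil =>
      simp at hα
      obtain ⟨hlhs, hδ⟩ := hα
      subst hδ
      refine ⟨_, _, rfl, hm, hlhs.symm, ?_⟩
      rw [hβ] at h'
      simpa using h'

lemma derivesL_single_inv {X : N} {rs x} (h : DerivesL G' [Sum.inr X] rs x) :
    ∃ r rs', rs = r :: rs' ∧ r ∈ G'.rules ∧ r.lhs = X ∧ DerivesL G' r.rhs rs' x :=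
  derivesL_single_inv' h X rfl

lemma derivesL_append_inv : ∀ {γ : List (T ⊕ N)} {rs x}, DerivesL G' γ rs x →
    ∀ α β, γ = α ++ β →
    ∃ rs1 rs2 x1 x2, rs = rs1 ++ rs2 ∧ x = x1 ++ x2 ∧
      DerivesL G' α rs1 x1 ∧ DerivesL G' β rs2 x2 := by
  intro γ rs x h
  induction h with
  | refl x =>
    intro α β hab
    obtain ⟨x1, x2, hx, h1, h2⟩ := List.map_eq_append_iff.mp hab
    exact ⟨[], [], x1, x2, rfl, hx, by rw [← h1]; exact DerivesL.refl x1,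
      by rw [← h2]; exact DerivesL.refl x2⟩
  | @step γ' γ2 r rs' x hs h' ih =>
    intro α β hab
    obtain ⟨hm, z, δ, hα, hβ⟩ := hs
    rw [hab] at hα
    rcases List.append_eq_append_iff.mp hα with ⟨a', hz, hbeta⟩ | ⟨c', hc1, hc2⟩
    · obtain ⟨z1, z2, hz12, hz1, hz2⟩ := List.map_eq_append_iff.mp hz
      have hstep : StepL G' r β (z2.map Sum.inl ++ r.rhs ++ δ) :=
        ⟨hm, z2, δ, by rw [hbeta, hz2], rfl⟩
      have hγ2 : γ2 = α ++ (z2.map Sum.inl ++ r.rhs ++ δ) := by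
        rw [hβ, hz12, ← hz1]; simp
      obtain ⟨rs1, rs2, x1, x2, hrs, hx, hα', hβ'⟩ := ih _ _ hγ2
      obtain ⟨hrs1, _⟩ := derivesL_map_inl
        (show DerivesL G' (z1.map Sum.inl) rs1 x1 by rw [hz1]; exact hα')
      exact ⟨[], r :: rs2, x1, x2, by simp [hrs, hrs1],
        hx, hrs1 ▸ hα', DerivesL.step hstep hβ'⟩
    · cases c' with
      | nil =>
        simp at hc1 hc2
        have hstep : StepL G' r β (r.rhs ++ δ) := ⟨hm, [], δ, by simp [← hc2], by simp⟩
        have hγ2 : γ2 = α ++ (r.rhs ++ δ) := by rw [hβ, hc1]; simp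
        obtain ⟨rs1, rs2, x1, x2, hrs, hx, hα', hβ'⟩ := ih _ _ hγ2
        obtain ⟨hrs1, _⟩ := derivesL_map_inl
          (show DerivesL G' (z.map Sum.inl) rs1 x1 by rw [← hc1]; exact hα')
        exact ⟨[], r :: rs2, x1, x2, by simp [hrs, hrs1],
          hx, hrs1 ▸ hα', DerivesL.step hstep hβ'⟩
      | cons e c'' =>
        obtain ⟨he, hδ⟩ : Sum.inr r.lhs = e ∧ δ = c'' ++ β := by
          simpa using hc2
        have hstep : StepL G' r α (z.map Sum.inl ++ r.rhs ++ c'') :=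
          ⟨hm, z, c'', by rw [hc1, ← he], rfl⟩
        have hγ2 : γ2 = (z.map Sum.inl ++ r.rhs ++ c'') ++ β := by
          rw [hβ, hδ]; simp
        obtain ⟨rs1, rs2, x1, x2, hrs, hx, hα', hβ'⟩ := ih _ _ hγ2
        exact ⟨r :: rs1, rs2, x1, x2, by simp [hrs], hx,
          DerivesL.step hstep hα', hβ'⟩

end DerivAux

section ChainAux

lemma chainFrom_nil_inv {p q : Q} (h : ChainFrom A p [] q) : p = q := by
  cases h; rfl

lemma chainFrom_cons_inv {p q : Q} {b : Arc T Q K} {as : List (Arc T Q K)}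
    (h : ChainFrom A p (b :: as) q) :
    p = b.src ∧ b ∈ A.arcs ∧ ChainFrom A b.dst as q := by
  cases h with
  | cons hb h' => exact ⟨rfl, hb, h'⟩

lemma chainFrom_append_inv : ∀ (as1 : List (Arc T Q K)) {p q : Q} (as2 : List (Arc T Q K)),
    ChainFrom A p (as1 ++ as2) q → ∃ m, ChainFrom A p as1 m ∧ ChainFrom A m as2 q := by
  intro as1
  induction as1 with
  | nil => exact fun as2 h => ⟨_, ChainFrom.nil _, h⟩
  | cons b as ih =>
    intro p q as2 h
    obtain ⟨hp, hb, h'⟩ := chainFrom_cons_inv h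
    obtain ⟨m, h1, h2⟩ := ih as2 h'
    exact ⟨m, by rw [hp]; exact ChainFrom.cons hb h1, h2⟩

/-- An arc list is *normalized* if it is empty or ends with a labeled arc. -/
def ArcNorm (as : List (Arc T Q K)) : Prop :=
  ∀ a ∈ as.getLast?, (Arc.lab a).isSome

lemma arcNorm_nil : ArcNorm ([] : List (Arc T Q K)) := by
  intro a ha; simp at ha

lemma arcNorm_of_cons {b : Arc T Q K} {as : List (Arc T Q K)}
    (h : ArcNorm (b :: as)) : ArcNorm as := by
  cases as with
  | nil => exact arcNorm_nil
  | cons c as' => intro a ha; exact h a (by rw [List.getLast?_cons_cons]; exact ha)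

lemma arcNorm_cons_of_ne {b : Arc T Q K} {as : List (Arc T Q K)}
    (h : ArcNorm as) (hne : as ≠ []) : ArcNorm (b :: as) := by
  cases as with
  | nil => exact absurd rfl hne
  | cons c as' => intro a ha; exact h a (by rwa [List.getLast?_cons_cons] at ha)

lemma arcNorm_cons_some {b : Arc T Q K} {as : List (Arc T Q K)}
    (h : ArcNorm as) (hb : (Arc.lab b).isSome) : ArcNorm (b :: as) := by
  cases as with
  | nil => intro a ha; simp at ha; rwa [← ha]
  | cons c as' => exact arcNorm_cons_of_ne h (by simp)

lemma arcNorm_eq_nil : ∀ {as : List (Arc T Q K)}, ArcNorm as →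
    as.filterMap Arc.lab = [] → as = [] := by
  intro as
  induction as with
  | nil => intro _ _; rfl
  | cons b as' ih =>
    intro h hy
    cases hbl : b.lab with
    | some c => rw [List.filterMap_cons, hbl] at hy; simp at hy
    | none =>
      rw [List.filterMap_cons, hbl] at hy
      have has' : as' = [] := ih (arcNorm_of_cons h) hy
      subst has'
      have := h b (by simp)
      rw [hbl] at this
      simp at this

lemma exists_norm_decomp (as : List (Arc T Q K)) :
    ∃ as0 as1, as = as0 ++ as1 ∧ ArcNorm as0 ∧ as1.filterMap Arc.lab = [] := by
  induction as using List.reverseRecOn with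
  | nil => exact ⟨[], [], rfl, arcNorm_nil, rfl⟩
  | append_singleton as b ih =>
    cases hb : b.lab with
    | some c =>
      refine ⟨as ++ [b], [], by simp, ?_, rfl⟩
      intro a ha
      rw [List.getLast?_concat] at ha
      simp at ha
      rw [← ha, hb]; rfl
    | none =>
      obtain ⟨as0, as1, h1, h2, h3⟩ := ih
      exact ⟨as0, as1 ++ [b], by rw [h1]; simp, h2,
        by simp [List.filterMap_append, h3, hb]⟩

lemma chain_split_yield : ∀ (as : List (Arc T Q K)) (p q : Q) (x1 x2 : List T),
    ChainFrom A p as q → ArcNorm as → as.filterMap Arc.lab = x1 ++ x2 →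
    ∃ m as1 as2, as = as1 ++ as2 ∧ ChainFrom A p as1 m ∧ ChainFrom A m as2 q ∧
      as1.filterMap Arc.lab = x1 ∧ as2.filterMap Arc.lab = x2 ∧
      ArcNorm as1 ∧ ArcNorm as2 := by
  intro as
  induction as with
  | nil =>
    intro p q x1 x2 hc hn hy
    have hpq := chainFrom_nil_inv hc
    obtain ⟨h1, h2⟩ : x1 = [] ∧ x2 = [] := by
      constructor <;> [exact (List.append_eq_nil_iff.mp hy.symm).1;
        exact (List.append_eq_nil_iff.mp hy.symm).2]
    exact ⟨p, [], [], rfl, ChainFrom.nil p, by rw [hpq]; exact ChainFrom.nil q,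
      by rw [h1]; rfl, by rw [h2]; rfl, arcNorm_nil, arcNorm_nil⟩
  | cons b as' ih =>
    intro p q x1 x2 hc hn hy
    obtain ⟨hp, hb, hc'⟩ := chainFrom_cons_inv hc
    cases x1 with
    | nil =>
      exact ⟨p, [], b :: as', rfl, ChainFrom.nil p,
        by rw [hp]; exact ChainFrom.cons hb hc', rfl, by simpa using hy,
        arcNorm_nil, hn⟩
    | cons a x1' =>
      cases hbl : b.lab with
      | some c =>
        rw [List.filterMap_cons, hbl] at hy
        obtain ⟨hca, hy'⟩ : c = a ∧ as'.filterMap Arc.lab = x1' ++ x2 := by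
          simpa using hy
        obtain ⟨m, as1, as2, h1, hch1, hch2, hy1, hy2, hn1, hn2⟩ :=
          ih b.dst q x1' x2 hc' (arcNorm_of_cons hn) hy'
        refine ⟨m, b :: as1, as2, by rw [h1]; rfl, ?_, hch2, ?_, hy2, ?_, hn2⟩
        · rw [hp]; exact ChainFrom.cons hb hch1
        · rw [List.filterMap_cons, hbl, hy1, hca]
        · exact arcNorm_cons_some hn1 (by rw [hbl]; rfl)
      | none =>
        rw [List.filterMap_cons, hbl] at hy
        obtain ⟨m, as1, as2, h1, hch1, hch2, hy1, hy2, hn1, hn2⟩ :=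
          ih b.dst q (a :: x1') x2 hc' (arcNorm_of_cons hn) hy
        have hne : as1 ≠ [] := by
          intro hh; rw [hh] at hy1; simp at hy1
        refine ⟨m, b :: as1, as2, by rw [h1]; rfl, ?_, hch2, ?_, hy2,
          arcNorm_cons_of_ne hn1 hne, hn2⟩
        · rw [hp]; exact ChainFrom.cons hb hch1
        · rw [List.filterMap_cons, hbl, hy1]

end ChainAux

section BHAux

lemma mem_bh_start {r : Rule T (BHNT T N Q) K} (h : r ∈ bhRulesStart G A) :
    r ∈ (BHGrammar G A).rules :=
  Or.inl (Or.inl (Or.inl (Or.inl (Or.inl (Or.inl h)))))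

lemma mem_bh_bar {r : Rule T (BHNT T N Q) K} (h : r ∈ bhRulesBar G A) :
    r ∈ (BHGrammar G A).rules :=
  Or.inl (Or.inl (Or.inl (Or.inl (Or.inl (Or.inr h)))))

lemma mem_bh_exit {r : Rule T (BHNT T N Q) K} (h : r ∈ bhRulesExit G A) :
    r ∈ (BHGrammar G A).rules :=
  Or.inl (Or.inl (Or.inl (Or.inl (Or.inr h))))

lemma mem_bh_cfg {r : Rule T (BHNT T N Q) K} (h : r ∈ bhRulesCFG G A) :
    r ∈ (BHGrammar G A).rules :=
  Or.inl (Or.inl (Or.inl (Or.inr h)))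

lemma mem_bh_nil {r : Rule T (BHNT T N Q) K} (h : r ∈ bhRulesNil G A) :
    r ∈ (BHGrammar G A).rules :=
  Or.inl (Or.inl (Or.inr h))

lemma mem_bh_arc {r : Rule T (BHNT T N Q) K} (h : r ∈ bhRulesArc G A) :
    r ∈ (BHGrammar G A).rules :=
  Or.inl (Or.inr h)

lemma mem_bh_arcEps {r : Rule T (BHNT T N Q) K} (h : r ∈ bhRulesArcEps G A) :
    r ∈ (BHGrammar G A).rules :=
  Or.inr h

lemma bh_term : ∀ (as : List (Arc T Q K)) (p q : Q) (a : T),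
    ChainFrom A p as q → ArcNorm as → as.filterMap Arc.lab = [a] →
    ∃ rs : List (Rule T (BHNT T N Q) K),
      DerivesL (BHGrammar G A) [Sum.inr (BHNT.trip p (BHSym.term a) q)] rs [a] ∧
      (rs.map Rule.wt).prod = (as.map Arc.wt).prod := by
  intro as
  induction as with
  | nil => intro p q a _ _ hy; simp at hy
  | cons b as' ih =>
    intro p q a hc hn hy
    obtain ⟨hp, hb, hc'⟩ := chainFrom_cons_inv hc
    cases hbl : b.lab with
    | some c =>
      rw [List.filterMap_cons, hbl] at hy
      obtain ⟨hca, hy'⟩ : c = a ∧ as'.filterMap Arc.lab = [] := by simpa using hy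
      subst hca
      have has' : as' = [] := arcNorm_eq_nil (arcNorm_of_cons hn) hy'
      subst has'
      have hq : b.dst = q := chainFrom_nil_inv hc'
      have hr : (⟨BHNT.trip p (BHSym.term c) q, [Sum.inl c], b.wt⟩ : Rule T (BHNT T N Q) K)
          = ⟨BHNT.trip b.src (BHSym.ofLab b.lab) b.dst, b.lab.toList.map Sum.inl, b.wt⟩ := by
        rw [hp, ← hq, hbl]; rfl
      have hmem := mem_bh_arc (G := G) ⟨b, hb, hr⟩
      refine ⟨[⟨BHNT.trip p (BHSym.term c) q, [Sum.inl c], b.wt⟩],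
        derivesL_head _ hmem ?_, by simp⟩
      simpa using DerivesL.refl (G := BHGrammar G A) [c]
    | none =>
      rw [List.filterMap_cons, hbl] at hy
      obtain ⟨rs', hd', hw'⟩ := ih b.dst q a hc' (arcNorm_of_cons hn) hy
      have hmemg : (⟨BHNT.trip p (BHSym.term a) q,
          [Sum.inr (BHNT.trip p BHSym.eps b.dst),
           Sum.inr (BHNT.trip b.dst (BHSym.term a) q)], 1⟩ :
          Rule T (BHNT T N Q) K) ∈ (BHGrammar G A).rules :=
        mem_bh_arcEps ⟨a, p, b.dst, q, rfl⟩
      have hmemf : (⟨BHNT.trip p BHSym.eps b.dst, [], b.wt⟩ : Rule T (BHNT T N Q) K)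
          ∈ (BHGrammar G A).rules :=
        mem_bh_arc ⟨b, hb, by rw [hp, hbl]; rfl⟩
      have d1 : DerivesL (BHGrammar G A) [Sum.inr (BHNT.trip p BHSym.eps b.dst)]
          [⟨BHNT.trip p BHSym.eps b.dst, [], b.wt⟩] [] :=
        derivesL_head _ hmemf (by simpa using DerivesL.refl (G := BHGrammar G A) [])
      have d2 := derivesL_append d1 hd'
      refine ⟨_ :: ([⟨BHNT.trip p BHSym.eps b.dst, [], b.wt⟩] ++ rs'),
        derivesL_head _ hmemg (by simpa using d2), ?_⟩
      simp [hw']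

/-- Induction statement for nonterminal subderivations. -/
def StmtN (G : WCFG T N K) (A : WFSA T Q K) (rs : List (Rule T N K)) : Prop :=
  ∀ (X : N) (x : List T), DerivesL G [Sum.inr X] rs x →
  ∀ (p q : Q) (as : List (Arc T Q K)), ChainFrom A p as q → ArcNorm as →
    as.filterMap Arc.lab = x →
  ∃ rs' : List (Rule T (BHNT T N Q) K),
    DerivesL (BHGrammar G A) [Sum.inr (BHNT.trip p (BHSym.nt X) q)] rs' x ∧
    (rs'.map Rule.wt).prod = (rs.map Rule.wt).prod * (as.map Arc.wt).prod

lemma bh_seq : ∀ (syms : List (T ⊕ N)) (rs : List (Rule T N K)) (x : List T),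
    (∀ rs1, rs1.length ≤ rs.length → StmtN G A rs1) →
    DerivesL G syms rs x →
    ∀ (p q : Q) (as : List (Arc T Q K)), ChainFrom A p as q → ArcNorm as →
      as.filterMap Arc.lab = x →
    ∃ (qs : List Q) (rs' : List (Rule T (BHNT T N Q) K)),
      qs.length = syms.length ∧ qs.getLastD p = q ∧
      DerivesL (BHGrammar G A) (tripRHS p syms qs) rs' x ∧
      (rs'.map Rule.wt).prod = (rs.map Rule.wt).prod * (as.map Arc.wt).prod := by
  intro syms
  induction syms with
  | nil =>
    intro rs x _ hder p q as hc hn hy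
    obtain ⟨hrs, hx⟩ := derivesL_map_inl' hder [] (by simp)
    subst hrs; subst hx
    have has : as = [] := arcNorm_eq_nil hn hy
    subst has
    have hpq := chainFrom_nil_inv hc
    exact ⟨[], [], rfl, hpq, by simpa [tripRHS] using DerivesL.refl (G := BHGrammar G A) [], by simp⟩
  | cons s ss ih =>
    intro rs x hN hder p q as hc hn hy
    obtain ⟨rs1, rs2, x1, x2, hrs, hx, h1, h2⟩ := derivesL_append_inv hder [s] ss rfl
    subst hrs; subst hx
    obtain ⟨m, as1, as2, has, hch1, hch2, hy1, hy2, hn1, hn2⟩ :=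
      chain_split_yield as p q x1 x2 hc hn hy
    have hN2 : ∀ rs', rs'.length ≤ rs2.length → StmtN G A rs' := by
      intro rs' h'
      exact hN rs' (le_trans h' (by simp))
    obtain ⟨qs', rsR, hlen, hlast, hdR, hwR⟩ := ih rs2 x2 hN2 h2 m q as2 hch2 hn2 hy2
    have hsym : ∃ rsL : List (Rule T (BHNT T N Q) K),
        DerivesL (BHGrammar G A) [Sum.inr (BHNT.trip p (BHSym.ofSym s) m)] rsL x1 ∧
        (rsL.map Rule.wt).prod = (rs1.map Rule.wt).prod * (as1.map Arc.wt).prod := by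
      cases s with
      | inl a =>
        obtain ⟨hrs1, hx1⟩ := derivesL_map_inl' h1 [a] (by simp)
        subst hrs1; subst hx1
        obtain ⟨rsL, hdL, hwL⟩ := bh_term as1 p m a hch1 hn1 hy1
        exact ⟨rsL, hdL, by simpa using hwL⟩
      | inr X =>
        exact hN rs1 (by simp) X x1 h1 p m as1 hch1 hn1 hy1
    obtain ⟨rsL, hdL, hwL⟩ := hsym
    refine ⟨m :: qs', rsL ++ rsR, by simp [hlen], ?_, ?_, ?_⟩
    · rw [List.getLastD_cons]; exact hlast
    · exact derivesL_append hdL hdR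
    · simp only [List.map_append, List.prod_append, hwL, hwR, has]
      ring
  
lemma bh_N_strong : ∀ (n : ℕ) (rs : List (Rule T N K)), rs.length ≤ n → StmtN G A rs := by
  intro n
  induction n with
  | zero =>
    intro rs hlen X x hder p q as hc hn hy
    obtain ⟨r, rs', hcons, -, -, -⟩ := derivesL_single_inv hder
    rw [List.length_eq_zero_iff.mp (Nat.le_zero.mp hlen)] at hcons
    exact absurd hcons (by simp)
  | succ n ihn =>
    intro rs hlen X x hder p q as hc hn hy
    obtain ⟨r, rs', hcons, hmem, hlhs, hrhs⟩ := derivesL_single_inv hder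
    subst hcons
    by_cases hnil : r.rhs = []
    · rw [hnil] at hrhs
      obtain ⟨hrs', hx⟩ := derivesL_nil_inv hrhs
      subst hrs'; subst hx
      have has : as = [] := arcNorm_eq_nil hn hy
      subst has
      have hpq := chainFrom_nil_inv hc
      subst hpq
      have hmemE : (⟨BHNT.trip p (BHSym.nt X) p, [], r.wt⟩ : Rule T (BHNT T N Q) K)
          ∈ (BHGrammar G A).rules :=
        mem_bh_nil ⟨r, p, hmem, hnil, by rw [hlhs]⟩
      exact ⟨[⟨BHNT.trip p (BHSym.nt X) p, [], r.wt⟩],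
        derivesL_head _ hmemE (by simpa using DerivesL.refl (G := BHGrammar G A) []),
        by simp⟩
    · have hlen' : rs'.length ≤ n := by simp at hlen; omega
      have hstep : ∀ rs1, rs1.length ≤ rs'.length → StmtN G A rs1 :=
        fun rs1 h1 => ihn rs1 (le_trans h1 hlen')
      obtain ⟨qs, rsS, hqlen, hqlast, hdS, hwS⟩ :=
        bh_seq r.rhs rs' x hstep hrhs p q as hc hn hy
      have hmemD : (⟨BHNT.trip p (BHSym.nt r.lhs) (qs.getLastD p), tripRHS p r.rhs qs, r.wt⟩
          : Rule T (BHNT T N Q) K) ∈ (BHGrammar G A).rules :=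
        mem_bh_cfg ⟨r, p, qs, hmem, hnil, hqlen, rfl⟩
      rw [hlhs, hqlast] at hmemD
      refine ⟨_ :: rsS, derivesL_head _ hmemD hdS, ?_⟩
      simp only [List.map_cons, List.prod_cons, hwS]
      ring

lemma bh_bar {qI : Q} (hqI : A.init qI ≠ 0) (x : List T) :
    ∀ (tail : List (Arc T Q K)) (m qF : Q), ChainFrom A m tail qF →
      tail.filterMap Arc.lab = [] →
      ∀ rs0 : List (Rule T (BHNT T N Q) K),
      DerivesL (BHGrammar G A) [Sum.inr (BHNT.trip qI BHSym.bar m)] rs0 x →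
      ∃ rs, DerivesL (BHGrammar G A) [Sum.inr (BHNT.trip qI BHSym.bar qF)] rs x ∧
        (rs.map Rule.wt).prod = (rs0.map Rule.wt).prod * (tail.map Arc.wt).prod := by
  intro tail
  induction tail using List.reverseRecOn with
  | nil =>
    intro m qF hc hy rs0 h0
    have := chainFrom_nil_inv hc
    subst this
    exact ⟨rs0, h0, by simp⟩
  | append_singleton ts e ih =>
    intro m qF hc hy rs0 h0
    obtain ⟨m2, h1, h2⟩ := chainFrom_append_inv ts [e] hc
    obtain ⟨hm2, he, h3⟩ := chainFrom_cons_inv h2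
    have hqF : e.dst = qF := chainFrom_nil_inv h3
    rw [List.filterMap_append] at hy
    obtain ⟨hyts, hye⟩ := List.append_eq_nil_iff.mp hy
    have hlab : e.lab = none := by simpa using hye
    obtain ⟨rs1, hd1, hw1⟩ := ih m e.src (hm2 ▸ h1) hyts rs0 h0
    have hmemB : (⟨BHNT.trip qI BHSym.bar qF,
        [Sum.inr (BHNT.trip qI BHSym.bar e.src), Sum.inr (BHNT.trip e.src BHSym.eps qF)],
        1⟩ : Rule T (BHNT T N Q) K) ∈ (BHGrammar G A).rules :=
      mem_bh_bar ⟨qI, e.src, qF, hqI, rfl⟩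
    have hmemF : (⟨BHNT.trip e.src BHSym.eps qF, [], e.wt⟩ : Rule T (BHNT T N Q) K)
        ∈ (BHGrammar G A).rules :=
      mem_bh_arc ⟨e, he, by rw [← hqF, hlab]; rfl⟩
    have d2 : DerivesL (BHGrammar G A) [Sum.inr (BHNT.trip e.src BHSym.eps qF)]
        [⟨BHNT.trip e.src BHSym.eps qF, [], e.wt⟩] [] :=
      derivesL_head _ hmemF (by simpa using DerivesL.refl (G := BHGrammar G A) [])
    have dd := derivesL_append hd1 d2
    refine ⟨_ :: (rs1 ++ [⟨BHNT.trip e.src BHSym.eps qF, [], e.wt⟩]),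
      derivesL_head _ hmemB (by simpa using dd), ?_⟩
    simp only [List.map_cons, List.prod_cons, List.map_append, List.prod_append, hw1]
    simp
    ring

end BHAux


end ProofAux


/-- **Completeness.**  For every derivation `t` of `G` and every path `π` of
`A` with the same yield, the generalized Bar-Hillel grammar `G∩` has a
derivation with that yield and weight `w(t) ⊗ w(π)`. -/
theorem bar_hillel_complete
    {T N Q K : Type*} [CommSemiring K] [Finite N] [Finite Q]
    (G : WCFG T N K) (A : WFSA T Q K) (hGfin : G.rules.Finite)
    (t : Deriv G G.start) (π : FSAPath A) (h : t.yield = π.yield) :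
    ∃ d : Deriv (BHGrammar G A) (BHGrammar G A).start,
      d.yield = t.yield ∧ d.weight = t.weight * π.weight := by
  obtain ⟨core, tail, hdecomp, hnorm, htail⟩ := exists_norm_decomp π.arcs
  have hchain : ChainFrom A π.src (core ++ tail) π.dst := by
    rw [← hdecomp]; exact π.chain
  obtain ⟨m, hc1, hc2⟩ := chainFrom_append_inv core tail hchain
  have hycore : core.filterMap Arc.lab = t.yield := by
    have : π.yield = core.filterMap Arc.lab := by
      simp [FSAPath.yield, hdecomp, List.filterMap_append, htail]
    rw [h, this]
  obtain ⟨rsN, hdN, hwN⟩ := bh_N_strong t.rules.length t.rules le_rfl G.start t.yield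
    t.ok π.src m core hc1 hnorm hycore
  have hmemC : (⟨BHNT.trip π.src BHSym.bar m,
      [Sum.inr (BHNT.trip π.src (BHSym.nt G.start) m)], 1⟩ : Rule T (BHNT T N Q) K)
      ∈ (BHGrammar G A).rules := mem_bh_exit ⟨π.src, m, π.src_init, rfl⟩
  have d0 : DerivesL (BHGrammar G A) [Sum.inr (BHNT.trip π.src BHSym.bar m)]
      ((⟨BHNT.trip π.src BHSym.bar m,
        [Sum.inr (BHNT.trip π.src (BHSym.nt G.start) m)], 1⟩ : Rule T (BHNT T N Q) K)
        :: rsN) t.yield :=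
    derivesL_head _ hmemC hdN
  obtain ⟨rsB, hdB, hwB⟩ := bh_bar π.src_init t.yield tail m π.dst hc2 htail _ d0
  have hmemA : (⟨BHNT.start, [Sum.inr (BHNT.trip π.src BHSym.bar π.dst)],
      A.init π.src * A.final π.dst⟩ : Rule T (BHNT T N Q) K) ∈ (BHGrammar G A).rules :=
    mem_bh_start ⟨π.src, π.dst, π.src_init, π.dst_final, rfl⟩
  refine ⟨⟨(⟨BHNT.start, [Sum.inr (BHNT.trip π.src BHSym.bar π.dst)],
      A.init π.src * A.final π.dst⟩ : Rule T (BHNT T N Q) K) :: rsB, t.yield,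
      derivesL_head _ hmemA hdB⟩, rfl, ?_⟩
  show ((((⟨BHNT.start, [Sum.inr (BHNT.trip π.src BHSym.bar π.dst)],
      A.init π.src * A.final π.dst⟩ : Rule T (BHNT T N Q) K) :: rsB).map Rule.wt).prod)
      = t.weight * π.weight
  simp only [List.map_cons, List.prod_cons, hwB, hwN, DerivFrom.weight, FSAPath.weight,
    hdecomp, List.map_append, List.prod_append, List.map_cons, List.prod_cons, one_mul]
  ring
end

section
/- Let Σ = {a, b}. Let A be the (Boolean-semiring) finite-state automaton with states {q0, q1, q2, q3}, arcs q0 --a--> q1, q1 --ε--> q2, q2 --b--> q3, sole initial state q0 and sole final state q3, and let G be the context-free grammar with rules S → A B, A → a, B → b. Then the intersection of the language of A and the language of G equals {ab}, yet the grammar produced from G and A by the original Bar-Hillel construction generates the empty language. -/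
/-- The two-element Boolean semiring `({false, true}, ∨, ∧, false, true)`. -/
inductive B2 : Type
  | fls : B2
  | tru : B2
  deriving DecidableEq

namespace B2
instance : Zero B2 := ⟨fls⟩
instance : One B2 := ⟨tru⟩
instance : Add B2 := ⟨fun a b => match a, b with | fls, b => b | tru, _ => tru⟩
instance : Mul B2 := ⟨fun a b => match a, b with | fls, _ => fls | tru, b => b⟩

/-- `B2` with disjunction as addition and conjunction as multiplication is a
commutative semiring: the Boolean semiring. -/
instance : CommSemiring B2 where
  add_assoc := by intro a b c; cases a <;> cases b <;> cases c <;> rfl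
  zero_add := by intro a; cases a <;> rfl
  add_zero := by intro a; cases a <;> rfl
  add_comm := by intro a b; cases a <;> cases b <;> rfl
  nsmul := nsmulRec
  mul_assoc := by intro a b c; cases a <;> cases b <;> cases c <;> rfl
  one_mul := by intro a; cases a <;> rfl
  mul_one := by intro a; cases a <;> rfl
  left_distrib := by intro a b c; cases a <;> cases b <;> cases c <;> rfl
  right_distrib := by intro a b c; cases a <;> cases b <;> cases c <;> rfl
  zero_mul := by intro a; cases a <;> rfl
  mul_zero := by intro a; cases a <;> rfl
  mul_comm := by intro a b; cases a <;> cases b <;> rfl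
end B2

/-- The alphabet `Σ = {a, b}`. -/
inductive TT : Type
  | a : TT
  | b : TT
  deriving DecidableEq

/-- The nonterminals `{S, A, B}`. -/
inductive NT3 : Type
  | S : NT3
  | A : NT3
  | B : NT3
  deriving DecidableEq

/-- The Boolean-semiring automaton with arcs
`q0 --a--> q1`, `q1 --ε--> q2`, `q2 --b--> q3`,
sole initial state `q0` and sole final state `q3`. -/
def exampleFSA : WFSA TT (Fin 4) B2 :=
  ⟨↑[(⟨0, some TT.a, 1, 1⟩ : Arc TT (Fin 4) B2),
     (⟨1, none, 1, 2⟩ : Arc TT (Fin 4) B2),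
     (⟨2, some TT.b, 1, 3⟩ : Arc TT (Fin 4) B2)],
   fun q => if q = 0 then 1 else 0,
   fun q => if q = 3 then 1 else 0⟩

/-- The grammar with rules `S → A B`, `A → a`, `B → b`. -/
def exampleCFG : WCFG TT NT3 B2 :=
  ⟨NT3.S,
   {(⟨NT3.S, [Sum.inr NT3.A, Sum.inr NT3.B], 1⟩ : Rule TT NT3 B2),
    (⟨NT3.A, [Sum.inl TT.a], 1⟩ : Rule TT NT3 B2),
    (⟨NT3.B, [Sum.inl TT.b], 1⟩ : Rule TT NT3 B2)}⟩

/-! ### Auxiliary lemmas -/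

lemma chain_inv {p q : Fin 4} {as} (h : ChainFrom exampleFSA p as q) :
    (as = [] ∧ p = q) ∨
    ∃ a as', as = a :: as' ∧ a ∈ exampleFSA.arcs ∧ a.src = p ∧
      ChainFrom exampleFSA a.dst as' q := by
  cases h with
  | nil => exact Or.inl ⟨rfl, rfl⟩
  | cons ha hc => exact Or.inr ⟨_, _, rfl, ha, rfl, hc⟩

lemma mem_arcs {a : Arc TT (Fin 4) B2} (h : a ∈ exampleFSA.arcs) :
    a = ⟨0, some TT.a, 1, 1⟩ ∨ a = ⟨1, none, 1, 2⟩ ∨ a = ⟨2, some TT.b, 1, 3⟩ := by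
  simpa [exampleFSA] using h

lemma path_yield (π : FSAPath exampleFSA) : π.yield = [TT.a, TT.b] := by
  obtain ⟨src, dst, arcs, ne, chain, hi, hf⟩ := π
  have hsrc : src = 0 := by
    by_contra h
    exact hi (by simp [exampleFSA, h])
  have hdst : dst = 3 := by
    by_contra h
    exact hf (by simp [exampleFSA, h])
  subst hsrc hdst
  show arcs.filterMap Arc.lab = [TT.a, TT.b]
  rcases chain_inv chain with ⟨-, h⟩ | ⟨a, as, rfl, ha, hsa, hc⟩
  · exact absurd h (by decide)
  rcases mem_arcs ha with rfl | rfl | rfl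
  · -- first arc is q0 --a--> q1
    rcases chain_inv hc with ⟨-, h⟩ | ⟨a, as', rfl, ha, hsa2, hc2⟩
    · exact absurd h (by decide)
    rcases mem_arcs ha with rfl | rfl | rfl
    · exact absurd hsa2 (by decide)
    · -- second arc is q1 --ε--> q2
      rcases chain_inv hc2 with ⟨-, h⟩ | ⟨a, as'', rfl, ha, hsa3, hc3⟩
      · exact absurd h (by decide)
      rcases mem_arcs ha with rfl | rfl | rfl
      · exact absurd hsa3 (by decide)
      · exact absurd hsa3 (by decide)
      · -- third arc is q2 --b--> q3
        rcases chain_inv hc3 with ⟨rfl, -⟩ | ⟨a, as''', rfl, ha, hsa4, -⟩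
        · rfl
        · rcases mem_arcs ha with rfl | rfl | rfl <;> exact absurd hsa4 (by decide)
    · exact absurd hsa2 (by decide)
  · exact absurd hsa (by decide)
  · exact absurd hsa (by decide)

/-- The unique accepting path of the example automaton. -/
def examplePath : FSAPath exampleFSA where
  src := 0
  dst := 3
  arcs := [⟨0, some TT.a, 1, 1⟩, ⟨1, none, 1, 2⟩, ⟨2, some TT.b, 1, 3⟩]
  ne := by simp
  chain := by
    have h3 : ChainFrom exampleFSA 3 [] 3 := ChainFrom.nil 3
    have h2 : ChainFrom exampleFSA 2 [⟨2, some TT.b, 1, 3⟩] 3 :=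
      ChainFrom.cons (a := ⟨2, some TT.b, 1, 3⟩) (by rw [exampleFSA]; exact Multiset.mem_coe.mpr (by simp)) h3
    have h1 : ChainFrom exampleFSA 1 [⟨1, none, 1, 2⟩, ⟨2, some TT.b, 1, 3⟩] 3 :=
      ChainFrom.cons (a := ⟨1, none, 1, 2⟩) (by rw [exampleFSA]; exact Multiset.mem_coe.mpr (by simp)) h2
    exact ChainFrom.cons (a := ⟨0, some TT.a, 1, 1⟩) (by rw [exampleFSA]; exact Multiset.mem_coe.mpr (by simp)) h1
  src_init := by decide
  dst_final := by decide

/-- A derivation `S ⇒ AB ⇒ aB ⇒ ab` in the example grammar. -/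
def exampleDeriv : Deriv exampleCFG exampleCFG.start where
  rules := [⟨NT3.S, [Sum.inr NT3.A, Sum.inr NT3.B], 1⟩,
            ⟨NT3.A, [Sum.inl TT.a], 1⟩,
            ⟨NT3.B, [Sum.inl TT.b], 1⟩]
  yield := [TT.a, TT.b]
  ok := by
    refine DerivesL.step ⟨by simp [exampleCFG], [], [], rfl, rfl⟩ ?_
    refine DerivesL.step ⟨by simp [exampleCFG], [], [Sum.inr NT3.B], rfl, rfl⟩ ?_
    refine DerivesL.step ⟨by simp [exampleCFG], [TT.a], [], rfl, rfl⟩ ?_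
    exact DerivesL.refl [TT.a, TT.b]

/-- Nonterminals of the original Bar-Hillel grammar of the example from which
no terminal string can be derived (once present, one stays forever). -/
def Bad : BHNT TT NT3 (Fin 4) → Prop
  | BHNT.start => True
  | BHNT.trip _ (BHSym.nt NT3.S) _ => True
  | BHNT.trip q0 (BHSym.nt NT3.A) q1 => ¬(q0 = 0 ∧ q1 = 1)
  | BHNT.trip q0 (BHSym.nt NT3.B) q1 => ¬(q0 = 2 ∧ q1 = 3)
  | BHNT.trip q0 (BHSym.term TT.a) q1 => ¬(q0 = 0 ∧ q1 = 1)
  | BHNT.trip q0 (BHSym.term TT.b) q1 => ¬(q0 = 2 ∧ q1 = 3)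
  | BHNT.trip _ BHSym.eps _ => False
  | BHNT.trip _ BHSym.bar _ => False

lemma rules_bad :
    ∀ r ∈ (OBHGrammar exampleCFG exampleFSA).rules, Bad r.lhs →
      ∃ Z, Sum.inr Z ∈ r.rhs ∧ Bad Z := by
  rintro r (((h | h) | h) | h) hbad
  · -- start rules
    obtain ⟨qI, qF, -, -, rfl⟩ := h
    exact ⟨BHNT.trip qI (BHSym.nt exampleCFG.start) qF, by simp, trivial⟩
  · -- CFG rules
    obtain ⟨r₀, q0, qs, hmem, hne, hlen, rfl⟩ := h
    simp only [exampleCFG, Set.mem_insert_iff, Set.mem_singleton_iff] at hmem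
    rcases hmem with rfl | rfl | rfl
    · -- S → A B
      rcases qs with _ | ⟨q1, _ | ⟨q2, _ | _⟩⟩ <;> simp at hlen
      by_cases h01 : q0 = 0 ∧ q1 = 1
      · refine ⟨BHNT.trip q1 (BHSym.nt NT3.B) q2, by simp [tripRHS, BHSym.ofSym], ?_⟩
        rintro ⟨h2, -⟩
        rw [h01.2] at h2
        exact absurd h2 (by decide)
      · exact ⟨BHNT.trip q0 (BHSym.nt NT3.A) q1, by simp [tripRHS, BHSym.ofSym], h01⟩
    · -- A → a
      rcases qs with _ | ⟨q1, _ | _⟩ <;> simp at hlen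
      exact ⟨BHNT.trip q0 (BHSym.term TT.a) q1, by simp [tripRHS, BHSym.ofSym], hbad⟩
    · -- B → b
      rcases qs with _ | ⟨q1, _ | _⟩ <;> simp at hlen
      exact ⟨BHNT.trip q0 (BHSym.term TT.b) q1, by simp [tripRHS, BHSym.ofSym], hbad⟩
  · -- nil rules: none
    obtain ⟨r₀, q, hmem, hnil, -⟩ := h
    simp only [exampleCFG, Set.mem_insert_iff, Set.mem_singleton_iff] at hmem
    rcases hmem with rfl | rfl | rfl <;> simp at hnil
  · -- arc rules: lhs is never bad
    obtain ⟨a, ha, rfl⟩ := h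
    rcases mem_arcs ha with rfl | rfl | rfl <;> simp [Bad, BHSym.ofLab] at hbad

lemma no_deriv :
    ∀ {α rs x}, DerivesL (OBHGrammar exampleCFG exampleFSA) α rs x →
      ∀ Y, Sum.inr Y ∈ α → Bad Y → False := by
  intro α rs x h
  induction h with
  | refl x =>
    intro Y hY _
    simp only [List.mem_map] at hY
    obtain ⟨t, -, ht⟩ := hY
    exact absurd ht (by simp)
  | @step α β r rs' x' hs hd ih =>
    intro Y hY hbad
    obtain ⟨hr, z, δ, hα, hβ⟩ := hs
    subst hα hβ
    rcases List.mem_append.1 hY with hY | hY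
    · simp only [List.mem_map] at hY
      obtain ⟨t, -, ht⟩ := hY
      exact absurd ht (by simp)
    · rcases List.mem_cons.1 hY with hY | hY
      · obtain rfl : Y = r.lhs := by exact Sum.inr.inj hY
        obtain ⟨Z, hZ, hbZ⟩ := rules_bad r hr hbad
        exact ih Z (by simp [hZ]) hbZ
      · exact ih Y (by simp [hY]) hbad

/-- The intersection of the language of the example automaton with the
language of the example grammar is `{ab}`, yet the grammar produced by the
**original** Bar-Hillel construction generates the empty language. -/
theorem original_bar_hillel_failure_boolean :
    ({x : List TT | (∃ t : Deriv exampleCFG exampleCFG.start, t.yield = x) ∧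
        (∃ π : FSAPath exampleFSA, π.yield = x)} = {[TT.a, TT.b]}) ∧
    ({x : List TT |
        ∃ d : Deriv (OBHGrammar exampleCFG exampleFSA) BHNT.start, d.yield = x}
      = ∅) := by
  constructor
  · ext x
    simp only [Set.mem_setOf_eq, Set.mem_singleton_iff]
    constructor
    · rintro ⟨-, π, hπ⟩
      exact hπ ▸ path_yield π
    · rintro rfl
      exact ⟨⟨exampleDeriv, rfl⟩, ⟨examplePath, rfl⟩⟩
  · rw [Set.eq_empty_iff_forall_notMem]
    rintro x ⟨d, -⟩
    exact no_deriv d.ok BHNT.start (by simp) trivial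
end

section
/- Let A be the WFSA over Σ = {a, b} and the semiring ℝ≥0∞ with states {q0, q1, q2}, arcs q0 --a/1--> q1, q1 --ε/(1/3)--> q1, q1 --b/1--> q2, λ(q0) = 1 and ρ(q2) = 1 (0 elsewhere), and let G be the WCFG with rules S → A B / 1, A → a / 1, B → b / 1. Then the grammar G∩ produced from G and A by the original Bar-Hillel construction has exactly one derivation with yield ab, and its weight is 1; hence L_{G∩}(ab) = 1, whereas L_G(ab) · L_A(ab) = 3/2. -/
open scoped ENNReal

/-- The `ℝ≥0∞`-weighted automaton with arcs `q0 --a/1--> q1`,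
`q1 --ε/(1/3)--> q1`, `q1 --b/1--> q2`, initial weight `1` at `q0` and final
weight `1` at `q2`. -/
noncomputable def loopFSA : WFSA TT (Fin 3) ℝ≥0∞ :=
  ⟨↑[(⟨0, some TT.a, 1, 1⟩ : Arc TT (Fin 3) ℝ≥0∞),
     (⟨1, none, 1/3, 1⟩ : Arc TT (Fin 3) ℝ≥0∞),
     (⟨1, some TT.b, 1, 2⟩ : Arc TT (Fin 3) ℝ≥0∞)],
   fun q => if q = 0 then 1 else 0,
   fun q => if q = 2 then 1 else 0⟩

/-- The `ℝ≥0∞`-weighted grammar with rules `S → A B / 1`, `A → a / 1`,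
`B → b / 1`. -/
def loopCFG : WCFG TT NT3 ℝ≥0∞ :=
  ⟨NT3.S,
   {(⟨NT3.S, [Sum.inr NT3.A, Sum.inr NT3.B], 1⟩ : Rule TT NT3 ℝ≥0∞),
    (⟨NT3.A, [Sum.inl TT.a], 1⟩ : Rule TT NT3 ℝ≥0∞),
    (⟨NT3.B, [Sum.inl TT.b], 1⟩ : Rule TT NT3 ℝ≥0∞)}⟩

namespace BH
noncomputable section
open Sum BHSym BHNT

abbrev GG := OBHGrammar loopCFG loopFSA
abbrev RB := Rule TT (BHNT TT NT3 (Fin 3)) ℝ≥0∞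

def ra : RB := ⟨BHNT.start, [inr (trip 0 (nt NT3.S) 2)], 1⟩
def rdS (q0 q1 q2 : Fin 3) : RB :=
  ⟨trip q0 (nt NT3.S) q2, [inr (trip q0 (nt NT3.A) q1), inr (trip q1 (nt NT3.B) q2)], 1⟩
def rdA (q0 q1 : Fin 3) : RB := ⟨trip q0 (nt NT3.A) q1, [inr (trip q0 (term TT.a) q1)], 1⟩
def rdB (q0 q1 : Fin 3) : RB := ⟨trip q0 (nt NT3.B) q1, [inr (trip q0 (term TT.b) q1)], 1⟩
def rfa : RB := ⟨trip 0 (term TT.a) 1, [inl TT.a], 1⟩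
def rfe : RB := ⟨trip 1 eps 1, [], 1/3⟩
def rfb : RB := ⟨trip 1 (term TT.b) 2, [inl TT.b], 1⟩

lemma mem_OBH (r : RB) (h : r ∈ GG.rules) :
    r = ra ∨ (∃ q0 q1 q2, r = rdS q0 q1 q2) ∨ (∃ q0 q1, r = rdA q0 q1) ∨
    (∃ q0 q1, r = rdB q0 q1) ∨ r = rfa ∨ r = rfe ∨ r = rfb := by
  rcases h with ((h | h) | h) | h
  · obtain ⟨qI, qF, hI, hF, rfl⟩ := h
    simp [loopFSA] at hI hF
    subst hI; subst hF
    left; simp [ra, loopFSA, loopCFG]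
  · obtain ⟨r₀, q0, qs, hr₀, hne, hlen, rfl⟩ := h
    simp only [loopCFG, Set.mem_insert_iff, Set.mem_singleton_iff] at hr₀
    rcases hr₀ with rfl | rfl | rfl
    · match qs, hlen with
      | [q1, q2], _ =>
        right; left
        exact ⟨q0, q1, q2, by simp [rdS, tripRHS, BHSym.ofSym]⟩
    · match qs, hlen with
      | [q1], _ =>
        right; right; left
        exact ⟨q0, q1, by simp [rdA, tripRHS, BHSym.ofSym]⟩
    · match qs, hlen with
      | [q1], _ =>
        right; right; right; left
        exact ⟨q0, q1, by simp [rdB, tripRHS, BHSym.ofSym]⟩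
  · obtain ⟨r₀, q, hr₀, hrhs, rfl⟩ := h
    simp only [loopCFG, Set.mem_insert_iff, Set.mem_singleton_iff] at hr₀
    rcases hr₀ with rfl | rfl | rfl <;> simp at hrhs
  · obtain ⟨a, ha, rfl⟩ := h
    simp only [loopFSA, Multiset.mem_coe, List.mem_cons, List.not_mem_nil, or_false] at ha
    rcases ha with rfl | rfl | rfl
    · right; right; right; right; left; simp [rfa, BHSym.ofLab]
    · right; right; right; right; right; left; simp [rfe, BHSym.ofLab]
    · right; right; right; right; right; right; simp [rfb, BHSym.ofLab]


lemma ra_mem : ra ∈ GG.rules := by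
  refine Or.inl (Or.inl (Or.inl ⟨0, 2, by simp [loopFSA], by simp [loopFSA], ?_⟩))
  simp [ra, loopFSA, loopCFG]

lemma rdS_mem (q0 q1 q2 : Fin 3) : rdS q0 q1 q2 ∈ GG.rules := by
  refine Or.inl (Or.inl (Or.inr ⟨⟨NT3.S, [inr NT3.A, inr NT3.B], 1⟩, q0, [q1, q2],
    by simp [loopCFG], by simp, by simp, ?_⟩))
  simp [rdS, tripRHS, BHSym.ofSym]

lemma rdA_mem (q0 q1 : Fin 3) : rdA q0 q1 ∈ GG.rules := by
  refine Or.inl (Or.inl (Or.inr ⟨⟨NT3.A, [inl TT.a], 1⟩, q0, [q1],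
    by simp [loopCFG], by simp, by simp, ?_⟩))
  simp [rdA, tripRHS, BHSym.ofSym]

lemma rdB_mem (q0 q1 : Fin 3) : rdB q0 q1 ∈ GG.rules := by
  refine Or.inl (Or.inl (Or.inr ⟨⟨NT3.B, [inl TT.b], 1⟩, q0, [q1],
    by simp [loopCFG], by simp, by simp, ?_⟩))
  simp [rdB, tripRHS, BHSym.ofSym]

lemma rfa_mem : rfa ∈ GG.rules := by
  refine Or.inr ⟨⟨0, some TT.a, 1, 1⟩, by simp [loopFSA], ?_⟩
  simp [rfa, BHSym.ofLab]

lemma rfb_mem : rfb ∈ GG.rules := by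
  refine Or.inr ⟨⟨1, some TT.b, 1, 2⟩, by simp [loopFSA], ?_⟩
  simp [rfb, BHSym.ofLab]

def ruleList : List RB := [ra, rdS 0 1 2, rdA 0 1, rfa, rdB 1 2, rfb]

lemma drv : DerivesL GG [inr BHNT.start] ruleList [TT.a, TT.b] := by
  refine .step (β := [inr (trip 0 (nt NT3.S) 2)]) ⟨ra_mem, [], [], by simp [ra], by simp [ra]⟩ ?_
  refine .step (β := [inr (trip 0 (nt NT3.A) 1), inr (trip 1 (nt NT3.B) 2)])
    ⟨rdS_mem 0 1 2, [], [], by simp [rdS], by simp [rdS]⟩ ?_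
  refine .step (β := [inr (trip 0 (term TT.a) 1), inr (trip 1 (nt NT3.B) 2)])
    ⟨rdA_mem 0 1, [], [inr (trip 1 (nt NT3.B) 2)], by simp [rdA], by simp [rdA]⟩ ?_
  refine .step (β := [inl TT.a, inr (trip 1 (nt NT3.B) 2)])
    ⟨rfa_mem, [], [inr (trip 1 (nt NT3.B) 2)], by simp [rfa], by simp [rfa]⟩ ?_
  refine .step (β := [inl TT.a, inr (trip 1 (term TT.b) 2)])
    ⟨rdB_mem 1 2, [TT.a], [], by simp [rdB], by simp [rdB]⟩ ?_
  refine .step (β := [inl TT.a, inl TT.b])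
    ⟨rfb_mem, [TT.a], [], by simp [rfb], by simp [rfb]⟩ ?_
  exact .refl [TT.a, TT.b]


lemma derives_inv {T N K : Type*} {G : WCFG T N K} {α rs x} (h : DerivesL G α rs x) :
    (rs = [] ∧ α = x.map Sum.inl) ∨
    (∃ r rs' β, rs = r :: rs' ∧ StepL G r α β ∧ DerivesL G β rs' x) := by
  cases h with
  | refl => exact Or.inl ⟨rfl, rfl⟩
  | step hs h => exact Or.inr ⟨_, _, _, rfl, hs, h⟩

lemma uniq_deriv : ∀ {rs x}, DerivesL GG [inr BHNT.start] rs x →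
    rs = ruleList ∧ x = [TT.a, TT.b] := by
  intro rs x h
  -- stage 1
  rcases derives_inv h with ⟨rfl, hα⟩ | ⟨r, rs1, β, rfl, ⟨hr, z, δ, hα, hβ⟩, h⟩
  · rcases x with _|⟨xa, _|⟨xb, xt⟩⟩ <;> simp at hα
  cases z with
  | cons t z' => simp at hα
  | nil =>
  simp only [List.map_nil, List.map_cons, List.nil_append, List.cons_append, List.singleton_append, List.append_nil, List.cons.injEq, Sum.inr.injEq, Sum.inl.injEq] at hα
  obtain ⟨hlhs, rfl⟩ := hα
  rcases mem_OBH r hr with rfl | ⟨a0,a1,a2,rfl⟩ | ⟨a0,a1,rfl⟩ | ⟨a0,a1,rfl⟩ | rfl | rfl | rfl <;>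
    simp only [ra, rdS, rdA, rdB, rfa, rfe, rfb, BHNT.trip.injEq, BHSym.nt.injEq, BHSym.term.injEq, reduceCtorEq, and_true, true_and, and_false, false_and] at hlhs
  subst hβ
  simp only [ra, List.map_nil, List.map_cons, List.nil_append, List.cons_append, List.singleton_append, List.append_nil, List.cons.injEq, Sum.inr.injEq, Sum.inl.injEq] at h
  -- stage 2
  rcases derives_inv h with ⟨rfl, hα⟩ | ⟨r, rs2, β, rfl, ⟨hr, z, δ, hα, hβ⟩, h⟩
  · rcases x with _|⟨xa, _|⟨xb, xt⟩⟩ <;> simp at hα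
  cases z with
  | cons t z' => simp at hα
  | nil =>
  simp only [List.map_nil, List.map_cons, List.nil_append, List.cons_append, List.singleton_append, List.append_nil, List.cons.injEq, Sum.inr.injEq, Sum.inl.injEq] at hα
  obtain ⟨hlhs, rfl⟩ := hα
  rcases mem_OBH r hr with rfl | ⟨b0,b1,b2,rfl⟩ | ⟨b0,b1,rfl⟩ | ⟨b0,b1,rfl⟩ | rfl | rfl | rfl <;>
    simp only [ra, rdS, rdA, rdB, rfa, rfe, rfb, BHNT.trip.injEq, BHSym.nt.injEq, BHSym.term.injEq, reduceCtorEq, and_true, true_and, and_false, false_and] at hlhs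
  obtain ⟨rfl, rfl⟩ := hlhs
  subst hβ
  simp only [rdS, List.map_nil, List.map_cons, List.nil_append, List.cons_append, List.singleton_append, List.append_nil, List.cons.injEq, Sum.inr.injEq, Sum.inl.injEq] at h
  -- stage 3
  rcases derives_inv h with ⟨rfl, hα⟩ | ⟨r, rs3, β, rfl, ⟨hr, z, δ, hα, hβ⟩, h⟩
  · rcases x with _|⟨xa, _|⟨xb, xt⟩⟩ <;> simp at hα
  cases z with
  | cons t z' => simp at hα
  | nil =>
  simp only [List.map_nil, List.map_cons, List.nil_append, List.cons_append, List.singleton_append, List.append_nil, List.cons.injEq, Sum.inr.injEq, Sum.inl.injEq] at hα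
  obtain ⟨hlhs, rfl⟩ := hα
  rcases mem_OBH r hr with rfl | ⟨b0,b1,b2,rfl⟩ | ⟨b0,b1,rfl⟩ | ⟨b0,b1,rfl⟩ | rfl | rfl | rfl <;>
    simp only [ra, rdS, rdA, rdB, rfa, rfe, rfb, BHNT.trip.injEq, BHSym.nt.injEq, BHSym.term.injEq, reduceCtorEq, and_true, true_and, and_false, false_and] at hlhs
  obtain ⟨rfl, rfl⟩ := hlhs
  subst hβ
  simp only [rdA, List.map_nil, List.map_cons, List.nil_append, List.cons_append, List.singleton_append, List.append_nil, List.cons.injEq, Sum.inr.injEq, Sum.inl.injEq] at h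
  -- stage 4
  rcases derives_inv h with ⟨rfl, hα⟩ | ⟨r, rs4, β, rfl, ⟨hr, z, δ, hα, hβ⟩, h⟩
  · rcases x with _|⟨xa, _|⟨xb, xt⟩⟩ <;> simp at hα
  cases z with
  | cons t z' => simp at hα
  | nil =>
  simp only [List.map_nil, List.map_cons, List.nil_append, List.cons_append, List.singleton_append, List.append_nil, List.cons.injEq, Sum.inr.injEq, Sum.inl.injEq] at hα
  obtain ⟨hlhs, rfl⟩ := hα
  rcases mem_OBH r hr with rfl | ⟨b0,b1,b2,rfl⟩ | ⟨b0,b1,rfl⟩ | ⟨b0,b1,rfl⟩ | rfl | rfl | rfl <;>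
    simp only [ra, rdS, rdA, rdB, rfa, rfe, rfb, BHNT.trip.injEq, BHSym.nt.injEq, BHSym.term.injEq, reduceCtorEq, and_true, true_and, and_false, false_and] at hlhs
  subst hlhs
  subst hβ
  simp only [rfa, List.map_nil, List.map_cons, List.nil_append, List.cons_append, List.singleton_append, List.append_nil, List.cons.injEq, Sum.inr.injEq, Sum.inl.injEq] at h
  -- stage 5
  rcases derives_inv h with ⟨rfl, hα⟩ | ⟨r, rs5, β, rfl, ⟨hr, z, δ, hα, hβ⟩, h⟩
  · rcases x with _|⟨xa, _|⟨xb, xt⟩⟩ <;> simp at hα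
  cases z with
  | nil => simp at hα
  | cons t z' =>
  cases z' with
  | cons t' z'' => simp at hα
  | nil =>
  simp only [List.map_nil, List.map_cons, List.nil_append, List.cons_append, List.singleton_append, List.append_nil, List.cons.injEq, Sum.inr.injEq, Sum.inl.injEq] at hα
  obtain ⟨rfl, hlhs, rfl⟩ := hα
  rcases mem_OBH r hr with rfl | ⟨b0,b1,b2,rfl⟩ | ⟨b0,b1,rfl⟩ | ⟨b0,b1,rfl⟩ | rfl | rfl | rfl <;>
    simp only [ra, rdS, rdA, rdB, rfa, rfe, rfb, BHNT.trip.injEq, BHSym.nt.injEq, BHSym.term.injEq, reduceCtorEq, and_true, true_and, and_false, false_and] at hlhs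
  obtain ⟨rfl, rfl⟩ := hlhs
  subst hβ
  simp only [rdB, List.map_nil, List.map_cons, List.nil_append, List.cons_append, List.singleton_append, List.append_nil, List.cons.injEq, Sum.inr.injEq, Sum.inl.injEq] at h
  -- stage 6
  rcases derives_inv h with ⟨rfl, hα⟩ | ⟨r, rs6, β, rfl, ⟨hr, z, δ, hα, hβ⟩, h⟩
  · rcases x with _|⟨xa, _|⟨xb, xt⟩⟩ <;> simp at hα
  cases z with
  | nil => simp at hα
  | cons t z' =>
  cases z' with
  | cons t' z'' => simp at hα
  | nil =>
  simp only [List.map_nil, List.map_cons, List.nil_append, List.cons_append, List.singleton_append, List.append_nil, List.cons.injEq, Sum.inr.injEq, Sum.inl.injEq] at hα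
  obtain ⟨rfl, hlhs, rfl⟩ := hα
  rcases mem_OBH r hr with rfl | ⟨b0,b1,b2,rfl⟩ | ⟨b0,b1,rfl⟩ | ⟨b0,b1,rfl⟩ | rfl | rfl | rfl <;>
    simp only [ra, rdS, rdA, rdB, rfa, rfe, rfb, BHNT.trip.injEq, BHSym.nt.injEq, BHSym.term.injEq, reduceCtorEq, and_true, true_and, and_false, false_and] at hlhs
  subst hβ
  simp only [rfb, List.map_nil, List.map_cons, List.nil_append, List.cons_append, List.singleton_append, List.append_nil, List.cons.injEq, Sum.inr.injEq, Sum.inl.injEq] at h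
  -- stage 7 : form [inl a, inl b], must be refl
  rcases derives_inv h with ⟨rfl, hα⟩ | ⟨r, rs7, β, rfl, ⟨hr, z, δ, hα, hβ⟩, h⟩
  · rcases x with _|⟨xa, _|⟨xb, _|⟨xc, xt⟩⟩⟩ <;> simp at hα
    obtain ⟨rfl, rfl⟩ := hα
    exact ⟨rfl, rfl⟩
  · cases z with
    | nil => simp at hα
    | cons t z' =>
      cases z' with
      | nil => simp at hα
      | cons t' z'' => simp at hα

/-! ### The plain CFG: unique derivation -/

def rS : Rule TT NT3 ℝ≥0∞ := ⟨NT3.S, [inr NT3.A, inr NT3.B], 1⟩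
def rA : Rule TT NT3 ℝ≥0∞ := ⟨NT3.A, [inl TT.a], 1⟩
def rB : Rule TT NT3 ℝ≥0∞ := ⟨NT3.B, [inl TT.b], 1⟩

lemma mem_CFG (r : Rule TT NT3 ℝ≥0∞) (h : r ∈ loopCFG.rules) :
    r = rS ∨ r = rA ∨ r = rB := by
  simpa [loopCFG, rS, rA, rB] using h

lemma drv_cfg : DerivesL loopCFG [inr NT3.S] [rS, rA, rB] [TT.a, TT.b] := by
  refine .step (β := [inr NT3.A, inr NT3.B])
    ⟨by simp [loopCFG, rS], [], [], by simp [rS], by simp [rS]⟩ ?_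
  refine .step (β := [inl TT.a, inr NT3.B])
    ⟨by simp [loopCFG, rA], [], [inr NT3.B], by simp [rA], by simp [rA]⟩ ?_
  refine .step (β := [inl TT.a, inl TT.b])
    ⟨by simp [loopCFG, rB], [TT.a], [], by simp [rB], by simp [rB]⟩ ?_
  exact .refl [TT.a, TT.b]

lemma uniq_cfg : ∀ {rs x}, DerivesL loopCFG [inr NT3.S] rs x →
    rs = [rS, rA, rB] ∧ x = [TT.a, TT.b] := by
  intro rs x h
  rcases derives_inv h with ⟨rfl, hα⟩ | ⟨r, rs1, β, rfl, ⟨hr, z, δ, hα, hβ⟩, h⟩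
  · rcases x with _|⟨xa, _|⟨xb, xt⟩⟩ <;> simp at hα
  cases z with
  | cons t z' => simp at hα
  | nil =>
  simp only [List.map_nil, List.nil_append, List.cons.injEq, Sum.inr.injEq] at hα
  obtain ⟨hlhs, rfl⟩ := hα
  rcases mem_CFG r hr with rfl | rfl | rfl <;>
    simp only [rS, rA, rB, reduceCtorEq] at hlhs
  subst hβ
  simp only [rS, List.nil_append, List.append_nil] at h
  rcases derives_inv h with ⟨rfl, hα⟩ | ⟨r, rs2, β, rfl, ⟨hr, z, δ, hα, hβ⟩, h⟩
  · rcases x with _|⟨xa, _|⟨xb, xt⟩⟩ <;> simp at hα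
  cases z with
  | cons t z' => simp at hα
  | nil =>
  simp only [List.map_nil, List.nil_append, List.cons.injEq, Sum.inr.injEq] at hα
  obtain ⟨hlhs, rfl⟩ := hα
  rcases mem_CFG r hr with rfl | rfl | rfl <;>
    simp only [rS, rA, rB, reduceCtorEq] at hlhs
  subst hβ
  simp only [rA, List.nil_append, List.append_nil, List.cons_append] at h
  rcases derives_inv h with ⟨rfl, hα⟩ | ⟨r, rs3, β, rfl, ⟨hr, z, δ, hα, hβ⟩, h⟩
  · rcases x with _|⟨xa, _|⟨xb, xt⟩⟩ <;> simp at hα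
  cases z with
  | nil => simp at hα
  | cons t z' =>
  cases z' with
  | cons t' z'' => simp at hα
  | nil =>
  simp only [List.map_cons, List.map_nil, List.cons_append, List.nil_append, List.cons.injEq,
    Sum.inr.injEq, Sum.inl.injEq] at hα
  obtain ⟨rfl, hlhs, rfl⟩ := hα
  rcases mem_CFG r hr with rfl | rfl | rfl <;>
    simp only [rS, rA, rB, reduceCtorEq] at hlhs
  subst hβ
  simp only [rB, List.nil_append, List.append_nil, List.cons_append, List.map_cons,
    List.map_nil] at h
  rcases derives_inv h with ⟨rfl, hα⟩ | ⟨r, rs4, β, rfl, ⟨hr, z, δ, hα, hβ⟩, h⟩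
  · rcases x with _|⟨xa, _|⟨xb, _|⟨xc, xt⟩⟩⟩ <;> simp at hα
    obtain ⟨rfl, rfl⟩ := hα
    exact ⟨rfl, rfl⟩
  · cases z with
    | nil => simp at hα
    | cons t z' =>
      cases z' with
      | nil => simp at hα
      | cons t' z'' => simp at hα

/-! ### Extensionality for derivations and paths -/

lemma DerivFrom.ext'' {T N K : Type*} {G : WCFG T N K} {α : List (T ⊕ N)}
    {d d' : DerivFrom G α} (h1 : d.rules = d'.rules) (h2 : d.yield = d'.yield) : d = d' := by
  cases d; cases d'
  cases h1; cases h2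
  rfl

/-! ### Paths of the automaton -/

def arc0 : Arc TT (Fin 3) ℝ≥0∞ := ⟨0, some TT.a, 1, 1⟩
def arc1 : Arc TT (Fin 3) ℝ≥0∞ := ⟨1, none, 1/3, 1⟩
def arc2 : Arc TT (Fin 3) ℝ≥0∞ := ⟨1, some TT.b, 1, 2⟩

lemma mem_arcs {a : Arc TT (Fin 3) ℝ≥0∞} (h : a ∈ loopFSA.arcs) :
    a = arc0 ∨ a = arc1 ∨ a = arc2 := by
  simpa [loopFSA, arc0, arc1, arc2] using h

lemma arc0_mem : arc0 ∈ loopFSA.arcs := by simp [loopFSA, arc0]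
lemma arc1_mem : arc1 ∈ loopFSA.arcs := by simp [loopFSA, arc1]
lemma arc2_mem : arc2 ∈ loopFSA.arcs := by simp [loopFSA, arc2]

lemma chain_cases {p : Fin 3} {as : List (Arc TT (Fin 3) ℝ≥0∞)} {q : Fin 3}
    (h : ChainFrom loopFSA p as q) :
    (p = 0 → (as = [] ∧ q = 0) ∨ (∃ bs, as = arc0 :: bs ∧ ChainFrom loopFSA 1 bs q)) ∧
    (p = 1 → (∃ k, as = List.replicate k arc1 ∧ q = 1) ∨
             (∃ k, as = List.replicate k arc1 ++ [arc2] ∧ q = 2)) ∧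
    (p = 2 → as = [] ∧ q = 2) := by
  induction h with
  | nil q =>
    refine ⟨fun hq => Or.inl ⟨rfl, hq⟩, fun hq => Or.inl ⟨0, rfl, hq⟩,
      fun hq => ⟨rfl, hq⟩⟩
  | cons ha hc ih =>
    rcases mem_arcs ha with rfl | rfl | rfl
    · refine ⟨fun _ => ?_, fun hq => by simp [arc0] at hq, fun hq => by simp [arc0] at hq⟩
      exact Or.inr ⟨_, rfl, hc⟩
    · refine ⟨fun hq => by simp [arc1] at hq, fun _ => ?_, fun hq => by simp [arc1] at hq⟩
      rcases ih.2.1 rfl with ⟨k, rfl, rfl⟩ | ⟨k, rfl, rfl⟩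
      · exact Or.inl ⟨k + 1, by simp [List.replicate_succ], rfl⟩
      · exact Or.inr ⟨k + 1, by simp [List.replicate_succ], rfl⟩
    · refine ⟨fun hq => by simp [arc2] at hq, fun _ => ?_, fun hq => by simp [arc2] at hq⟩
      obtain ⟨rfl, rfl⟩ := ih.2.2 rfl
      exact Or.inr ⟨0, rfl, rfl⟩

lemma chain_repl (k : ℕ) : ChainFrom loopFSA 1 (List.replicate k arc1 ++ [arc2]) 2 := by
  induction k with
  | zero => exact .cons arc2_mem (.nil 2)
  | succ k ih => exact .cons arc1_mem ih

/-- The accepting path with `k` loops. -/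
def pathOf (k : ℕ) : FSAPath loopFSA :=
  ⟨0, 2, arc0 :: (List.replicate k arc1 ++ [arc2]), by simp,
   .cons arc0_mem (chain_repl k), by simp [loopFSA], by simp [loopFSA]⟩

lemma yield_repl (k : ℕ) : (List.replicate k arc1).filterMap Arc.lab = [] := by
  induction k with
  | zero => rfl
  | succ k ih => simp [List.replicate_succ, arc1, ih]

lemma pathOf_yield (k : ℕ) : (pathOf k).yield = [TT.a, TT.b] := by
  simp [pathOf, FSAPath.yield, yield_repl k, arc0, arc2]

lemma pathOf_weight (k : ℕ) : (pathOf k).weight = (1 / 3 : ℝ≥0∞) ^ k := by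
  simp [pathOf, FSAPath.weight, loopFSA, arc0, arc1, arc2, List.map_replicate,
    List.prod_replicate]

lemma path_struct (π : FSAPath loopFSA) : ∃ k, π = pathOf k := by
  obtain ⟨src, dst, arcs, ne, chain, hsrc, hdst⟩ := π
  simp only [loopFSA, ne_eq, ite_eq_right_iff, one_ne_zero, imp_false, not_not] at hsrc hdst
  subst hsrc; subst hdst
  rcases (chain_cases chain).1 rfl with ⟨rfl, h2⟩ | ⟨bs, rfl, hc⟩
  · exact absurd rfl ne
  rcases (chain_cases hc).2.1 rfl with ⟨k, rfl, h2⟩ | ⟨k, rfl, -⟩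
  · exact absurd h2 (by decide)
  · exact ⟨k, rfl⟩

lemma pathOf_inj : Function.Injective pathOf := by
  intro k k' h
  have := congrArg (fun π => π.arcs.length) h
  simpa [pathOf] using this

end
end BH

/-- The grammar produced by the **original** Bar-Hillel construction from
`loopCFG` and `loopFSA` has exactly one derivation with yield `ab`, and its
weight is `1`; hence `L_{G∩}(ab) = 1`, whereas
`L_G(ab) · L_A(ab) = 1 · 3/2 = 3/2`. -/
theorem original_bar_hillel_failure_weights :
    (∃ d : Deriv (OBHGrammar loopCFG loopFSA) BHNT.start,
        d.yield = [TT.a, TT.b] ∧ d.weight = 1 ∧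
        ∀ d' : Deriv (OBHGrammar loopCFG loopFSA) BHNT.start,
          d'.yield = [TT.a, TT.b] → d' = d) ∧
    (∑' d : {d : Deriv (OBHGrammar loopCFG loopFSA) BHNT.start //
          d.yield = [TT.a, TT.b]}, d.1.weight) = 1 ∧
    (∑' t : {t : Deriv loopCFG loopCFG.start // t.yield = [TT.a, TT.b]},
        t.1.weight) *
      (∑' π : {π : FSAPath loopFSA // π.yield = [TT.a, TT.b]}, π.1.weight)
      = (3/2 : ℝ≥0∞) := by
  classical
  let d₀ : Deriv (OBHGrammar loopCFG loopFSA) BHNT.start := ⟨BH.ruleList, [TT.a, TT.b], BH.drv⟩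
  have hw : d₀.weight = 1 := by
    simp [d₀, DerivFrom.weight, BH.ruleList, BH.ra, BH.rdS, BH.rdA, BH.rdB, BH.rfa, BH.rfb]
  have huniq : ∀ d' : Deriv (OBHGrammar loopCFG loopFSA) BHNT.start, d' = d₀ := by
    intro d'
    obtain ⟨h1, h2⟩ := BH.uniq_deriv d'.ok
    exact BH.DerivFrom.ext'' h1 h2
  refine ⟨⟨d₀, rfl, hw, fun d' _ => huniq d'⟩, ?_, ?_⟩
  · rw [tsum_eq_single (⟨d₀, rfl⟩ :
      {d : Deriv (OBHGrammar loopCFG loopFSA) BHNT.start // d.yield = [TT.a, TT.b]})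
      (fun b hb => (hb (Subtype.ext (huniq b.1))).elim)]
    exact hw
  · -- CFG factor
    let d₁ : Deriv loopCFG loopCFG.start := ⟨[BH.rS, BH.rA, BH.rB], [TT.a, TT.b], BH.drv_cfg⟩
    have huniq₁ : ∀ d' : Deriv loopCFG loopCFG.start, d' = d₁ := by
      intro d'
      obtain ⟨h1, h2⟩ := BH.uniq_cfg d'.ok
      exact BH.DerivFrom.ext'' h1 h2
    have hcfg : (∑' t : {t : Deriv loopCFG loopCFG.start // t.yield = [TT.a, TT.b]},
        t.1.weight) = 1 := by
      rw [tsum_eq_single (⟨d₁, rfl⟩ :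
        {t : Deriv loopCFG loopCFG.start // t.yield = [TT.a, TT.b]})
        (fun b hb => (hb (Subtype.ext (huniq₁ b.1))).elim)]
      simp [d₁, DerivFrom.weight, BH.rS, BH.rA, BH.rB]
    -- path factor
    let f : ℕ → {π : FSAPath loopFSA // π.yield = [TT.a, TT.b]} :=
      fun k => ⟨BH.pathOf k, BH.pathOf_yield k⟩
    have hbij : Function.Bijective f := by
      constructor
      · intro k k' h
        exact BH.pathOf_inj (congrArg Subtype.val h)
      · intro π
        obtain ⟨k, hk⟩ := BH.path_struct π.1
        exact ⟨k, Subtype.ext hk.symm⟩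
    have hπ : (∑' π : {π : FSAPath loopFSA // π.yield = [TT.a, TT.b]}, π.1.weight)
        = (3/2 : ℝ≥0∞) := by
      rw [← (Equiv.ofBijective f hbij).tsum_eq (fun π => π.1.weight)]
      have : ∀ k : ℕ, ((Equiv.ofBijective f hbij) k).1.weight = (1/3 : ℝ≥0∞) ^ k :=
        fun k => BH.pathOf_weight k
      rw [tsum_congr this, ENNReal.tsum_geometric]
      have h13 : (1 : ℝ≥0∞) - 1/3 = 2/3 := by
        refine ENNReal.sub_eq_of_eq_add (by norm_num) ?_
        rw [ENNReal.div_add_div_same]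
        norm_num
        rw [ENNReal.div_self (by norm_num) (by norm_num)]
      rw [h13, ENNReal.inv_div (Or.inl (by norm_num)) (Or.inl (by norm_num))]
    rw [hcfg, hπ, one_mul]
end
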